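/- arXiv:1311.5736 — 10 statements merged into one kernel-verified Lean document; each statement's English description precedes it below -/
import Mathlib

section
/- Let f : [a,b] → ℝ be a function whose (n-1)-st derivative (n ≥ 1) is absolutely continuous on [a,b]. Then for any x ∈ [a,b], ∫_a^b f(t) dt = Σ_{k=0}^{n-1} (1/(k+1)!)[(x-a)^{k+1} f^{(k)}(a) + (-1)^k (b-x)^{k+1} f^{(k)}(b)] + (1/n!) ∫_a^b (x-t)^n f^{(n)}(t) dt. -/
open MeasureTheory Set

theorem stmt_0 (f : ℝ → ℝ) (a b : ℝ) (hab : a < b) (n : ℕ) (hn : 1 ≤ n)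
    (hf : ContDiff ℝ ((n - 1 : ℕ) : ℕ∞) f)
    (hf' : ∀ t ∈ Set.Icc a b,
      HasDerivAt (iteratedDeriv (n - 1) f) (iteratedDeriv n f t) t)
    (hint : IntervalIntegrable (iteratedDeriv n f) volume a b)
    (x : ℝ) (hx : x ∈ Set.Icc a b) :
    ∫ t in a..b, f t =
      (∑ k ∈ Finset.range n, (1 / (Nat.factorial (k + 1) : ℝ)) *
        ((x - a) ^ (k + 1) * iteratedDeriv k f a +
          (-1 : ℝ) ^ k * (b - x) ^ (k + 1) * iteratedDeriv k f b)) +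
      (1 / (Nat.factorial n : ℝ)) * ∫ t in a..b, (x - t) ^ n * iteratedDeriv n f t := by
  have huIcc : Set.uIcc a b = Set.Icc a b := Set.uIcc_of_le hab.le
  -- derivative of iterated derivatives up to order n on [a,b]
  have hderiv : ∀ m, m < n → ∀ t ∈ Set.Icc a b,
      HasDerivAt (iteratedDeriv m f) (iteratedDeriv (m + 1) f t) t := by
    intro m hm t ht
    rcases eq_or_lt_of_le (Nat.succ_le_of_lt hm) with hmn | hmn
    · have hmn : m + 1 = n := hmn
      rw [hmn, show m = n - 1 from by omega]
      exact hf' t ht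
    · have hle : (m : ℕ∞) < ((n - 1 : ℕ) : ℕ∞) := by
        exact_mod_cast (by omega : m < n - 1)
      have := (hf.differentiable_iteratedDeriv m (by exact_mod_cast hle)).differentiableAt
        (x := t)
      rw [iteratedDeriv_succ]
      exact this.hasDerivAt
  -- integrability of iterated derivatives up to order n
  have hintm : ∀ m, m ≤ n → IntervalIntegrable (iteratedDeriv m f) volume a b := by
    intro m hm
    rcases eq_or_lt_of_le hm with rfl | hm
    · exact hint
    · have hle : (m : ℕ∞) ≤ ((n - 1 : ℕ) : ℕ∞) := by
        exact_mod_cast (by omega : m ≤ n - 1)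
      exact (hf.continuous_iteratedDeriv m (by exact_mod_cast hle)).intervalIntegrable a b
  have key : ∀ m, m ≤ n → ∫ t in a..b, f t =
      (∑ k ∈ Finset.range m, (1 / (Nat.factorial (k + 1) : ℝ)) *
        ((x - a) ^ (k + 1) * iteratedDeriv k f a +
          (-1 : ℝ) ^ k * (b - x) ^ (k + 1) * iteratedDeriv k f b)) +
      (1 / (Nat.factorial m : ℝ)) * ∫ t in a..b, (x - t) ^ m * iteratedDeriv m f t := by
    intro m
    induction m with
    | zero => intro _; simp [iteratedDeriv_zero]
    | succ m ih =>
      intro hm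
      have hm' : m ≤ n := Nat.le_of_succ_le hm
      have hmn : m < n := hm
      rw [ih hm', Finset.sum_range_succ, add_assoc]
      congr 1
      -- integration by parts
      have hv : ∀ t ∈ Set.uIcc a b, HasDerivAt (fun t => -(x - t) ^ (m + 1))
          (((m : ℝ) + 1) * (x - t) ^ m) t := by
        intro t _
        have h1 : HasDerivAt (fun t : ℝ => x - t) (-1) t :=
          (hasDerivAt_id t).const_sub x
        have h2 : HasDerivAt (fun t => -(x - t) ^ (m + 1))
            (-(((m + 1 : ℕ) : ℝ) * (x - t) ^ m * -1)) t := (h1.pow (m + 1)).neg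
        convert h2 using 1
        push_cast
        ring
      have hu : ∀ t ∈ Set.uIcc a b, HasDerivAt (iteratedDeriv m f)
          (iteratedDeriv (m + 1) f t) t := by
        rw [huIcc]; exact hderiv m hmn
      have hv' : IntervalIntegrable (fun t => ((m : ℝ) + 1) * (x - t) ^ m) volume a b :=
        (Continuous.intervalIntegrable (by fun_prop) a b)
      have hu' : IntervalIntegrable (iteratedDeriv (m + 1) f) volume a b := hintm _ hm
      have ibp := intervalIntegral.integral_mul_deriv_eq_deriv_mul hu hv hu' hv'
      -- turn into statement about our integrals
      have e1 : ∫ t in a..b, iteratedDeriv m f t * (((m : ℝ) + 1) * (x - t) ^ m)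
          = ((m : ℝ) + 1) * ∫ t in a..b, (x - t) ^ m * iteratedDeriv m f t := by
        rw [← intervalIntegral.integral_const_mul]
        congr 1; ext t; ring
      have e2 : ∫ t in a..b, iteratedDeriv (m + 1) f t * (-(x - t) ^ (m + 1))
          = -∫ t in a..b, (x - t) ^ (m + 1) * iteratedDeriv (m + 1) f t := by
        rw [← intervalIntegral.integral_neg]
        congr 1; ext t; ring
      rw [e1, e2] at ibp
      have hsign : (x - b) ^ (m + 1) = -((-1 : ℝ) ^ m * (b - x) ^ (m + 1)) := by
        have h : (x - b) = -(b - x) := by ring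
        rw [h, neg_pow, pow_succ]
        ring
      rw [hsign] at ibp
      have hfac : ((Nat.factorial (m + 1) : ℝ)) = ((m : ℝ) + 1) * (Nat.factorial m : ℝ) := by
        rw [Nat.factorial_succ]; push_cast; ring
      have hfacpos : (0 : ℝ) < (Nat.factorial m : ℝ) := by positivity
      have hm1 : (0 : ℝ) < ((m : ℝ) + 1) := by positivity
      rw [hfac]
      field_simp
      linear_combination ibp
  exact key n le_rfl
end

section
/- Let f : [a,b] → ℝ be such that f^{(n-1)} (n ≥ 1) is absolutely continuous on [a,b] and |f^{(n)}| is quasi-convex on [a,b]. Then for all x ∈ [a,b]: |∫_a^b f(t) dt - Σ_{k=0}^{n-1} (1/(k+1)!)[(x-a)^{k+1} f^{(k)}(a) + (-1)^k (b-x)^{k+1} f^{(k)}(b)]| ≤ (1/n!)·{max{|f^{(n)}(a)|, |f^{(n)}(x)|}·(x-a)^{n+1}/(n+1) + max{|f^{(n)}(x)|, |f^{(n)}(b)|}·(b-x)^{n+1}/(n+1)}. -/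
open MeasureTheory Set intervalIntegral

lemma aux_step (u v : ℝ → ℝ) (c x : ℝ) (k : ℕ)
    (hderiv : ∀ t ∈ uIcc c x, HasDerivAt u (v t) t)
    (hu : IntervalIntegrable u volume c x) (hv : IntervalIntegrable v volume c x) :
    ∫ t in c..x, (x - t) ^ k / (Nat.factorial k : ℝ) * u t =
      u c * ((x - c) ^ (k + 1) / (Nat.factorial (k + 1) : ℝ)) +
      ∫ t in c..x, (x - t) ^ (k + 1) / (Nat.factorial (k + 1) : ℝ) * v t := by
  have hfac : (Nat.factorial (k+1) : ℝ) ≠ 0 := by positivity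
  have key : ∀ t ∈ uIcc c x, HasDerivAt
      (fun t => -((x - t) ^ (k + 1) / (Nat.factorial (k + 1) : ℝ)) * u t)
      ((x - t) ^ k / (Nat.factorial k : ℝ) * u t -
        (x - t) ^ (k + 1) / (Nat.factorial (k + 1) : ℝ) * v t) t := by
    intro t ht
    have h1 : HasDerivAt (fun t : ℝ => -((x - t) ^ (k + 1) / (Nat.factorial (k + 1) : ℝ)))
        ((x - t) ^ k / (Nat.factorial k : ℝ)) t := by
      have h2 : HasDerivAt (fun t : ℝ => (x - t)) (-1 : ℝ) t := by
        simpa using (hasDerivAt_id t).const_sub x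
      have h3 := (h2.fun_pow (k+1))
      have := ((h3.div_const (Nat.factorial (k+1) : ℝ)).fun_neg)
      refine this.congr_deriv ?_
      field_simp [Nat.factorial_succ]
      rw [Nat.add_sub_cancel, Nat.factorial_succ]; push_cast; ring
    have := h1.fun_mul (hderiv t ht)
    refine this.congr_deriv ?_
    ring
  have hint1 : IntervalIntegrable (fun t => (x - t) ^ k / (Nat.factorial k : ℝ) * u t)
      volume c x := by
    have := hu.continuousOn_mul (g := fun t => (x - t) ^ k / (Nat.factorial k : ℝ))
      (by fun_prop)
    simpa [mul_comm] using this
  have hint2 : IntervalIntegrable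
      (fun t => (x - t) ^ (k + 1) / (Nat.factorial (k + 1) : ℝ) * v t) volume c x := by
    have := hv.continuousOn_mul (g := fun t => (x - t) ^ (k+1) / (Nat.factorial (k+1) : ℝ))
      (by fun_prop)
    simpa [mul_comm] using this
  have := intervalIntegral.integral_eq_sub_of_hasDerivAt key (hint1.sub hint2)
  rw [intervalIntegral.integral_sub hint1 hint2] at this
  have hxx : -((x - x) ^ (k + 1) / (Nat.factorial (k + 1) : ℝ)) * u x = 0 := by simp
  rw [hxx] at this
  linarith [this]

lemma taylor_int (f : ℝ → ℝ) (a b : ℝ) (hab : a ≤ b) (n : ℕ) (hn : 1 ≤ n)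
    (hf : ContDiff ℝ ((n - 1 : ℕ) : ℕ∞) f)
    (hf' : ∀ t ∈ Set.Icc a b,
      HasDerivAt (iteratedDeriv (n - 1) f) (iteratedDeriv n f t) t)
    (hint : IntervalIntegrable (iteratedDeriv n f) volume a b)
    (c x : ℝ) (hc : c ∈ Set.Icc a b) (hx : x ∈ Set.Icc a b) :
    ∫ t in c..x, f t =
      (∑ k ∈ Finset.range n,
        iteratedDeriv k f c * ((x - c) ^ (k + 1) / (Nat.factorial (k + 1) : ℝ))) +
      ∫ t in c..x, (x - t) ^ n / (Nat.factorial n : ℝ) * iteratedDeriv n f t := by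
  have hsub : uIcc c x ⊆ Icc a b := by
    intro t ht
    rw [Set.uIcc_eq_union] at ht
    rcases ht with ht | ht
    · exact ⟨hc.1.trans ht.1, ht.2.trans hx.2⟩
    · exact ⟨hx.1.trans ht.1, ht.2.trans hc.2⟩
  have hcont : ∀ m : ℕ, m ≤ n - 1 → Continuous (iteratedDeriv m f) := by
    intro m hm
    exact hf.continuous_iteratedDeriv m (by exact_mod_cast hm)
  have hii : ∀ m : ℕ, m ≤ n → IntervalIntegrable (iteratedDeriv m f) volume c x := by
    intro m hm
    rcases lt_or_eq_of_le hm with h | h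
    · exact ((hcont m (by omega)).continuousOn).intervalIntegrable
    · subst h
      exact hint.mono_set (by simpa [Set.uIcc_of_le hab] using hsub)
  have hD : ∀ m : ℕ, m + 1 ≤ n → ∀ t ∈ uIcc c x,
      HasDerivAt (iteratedDeriv m f) (iteratedDeriv (m + 1) f t) t := by
    intro m hm t ht
    rcases lt_or_eq_of_le hm with h | h
    · have hd := hf.differentiable_iteratedDeriv m
        (by exact_mod_cast (by omega : m < n - 1))
      have h2 := (hd t).hasDerivAt
      rwa [← iteratedDeriv_succ] at h2
    · have hm' : m = n - 1 := by omega
      subst hm'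
      have : n - 1 + 1 = n := by omega
      rw [this]
      exact hf' t (hsub ht)
  have main : ∀ m : ℕ, m ≤ n →
      ∫ t in c..x, f t =
        (∑ k ∈ Finset.range m,
          iteratedDeriv k f c * ((x - c) ^ (k + 1) / (Nat.factorial (k + 1) : ℝ))) +
        ∫ t in c..x, (x - t) ^ m / (Nat.factorial m : ℝ) * iteratedDeriv m f t := by
    intro m
    induction m with
    | zero => intro _; simp [iteratedDeriv_zero]
    | succ m ih =>
      intro hm1
      rw [ih (by omega), Finset.sum_range_succ,
        aux_step (iteratedDeriv m f) (iteratedDeriv (m+1) f) c x m (hD m hm1)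
          (hii m (by omega)) (hii (m+1) hm1)]
      ring
  exact main n le_rfl

theorem stmt_2 (f : ℝ → ℝ) (a b : ℝ) (hab : a < b) (n : ℕ) (hn : 1 ≤ n)
    (hf : ContDiff ℝ ((n - 1 : ℕ) : ℕ∞) f)
    (hf' : ∀ t ∈ Set.Icc a b,
      HasDerivAt (iteratedDeriv (n - 1) f) (iteratedDeriv n f t) t)
    (hint : IntervalIntegrable (iteratedDeriv n f) volume a b)
    (hq : ∀ u ∈ Set.Icc a b, ∀ v ∈ Set.Icc a b, ∀ α ∈ Set.Icc (0 : ℝ) 1,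
      |iteratedDeriv n f (α * u + (1 - α) * v)| ≤
        max |iteratedDeriv n f u| |iteratedDeriv n f v|)
    (x : ℝ) (hx : x ∈ Set.Icc a b) :
    |(∫ t in a..b, f t) -
      ∑ k ∈ Finset.range n, (1 / (Nat.factorial (k + 1) : ℝ)) *
        ((x - a) ^ (k + 1) * iteratedDeriv k f a +
          (-1 : ℝ) ^ k * (b - x) ^ (k + 1) * iteratedDeriv k f b)| ≤
    (1 / (Nat.factorial n : ℝ)) *
      (max |iteratedDeriv n f a| |iteratedDeriv n f x| * ((x - a) ^ (n + 1) / (n + 1)) +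
       max |iteratedDeriv n f x| |iteratedDeriv n f b| * ((b - x) ^ (n + 1) / (n + 1))) := by
  set D := iteratedDeriv n f with hD
  have ha : a ∈ Set.Icc a b := ⟨le_rfl, hab.le⟩
  have hb : b ∈ Set.Icc a b := ⟨hab.le, le_rfl⟩
  have hfc : Continuous f := by
    simpa [iteratedDeriv_zero] using hf.continuous_iteratedDeriv 0 (by exact_mod_cast Nat.zero_le _)
  set g : ℝ → ℝ := fun t => (x - t) ^ n / (Nat.factorial n : ℝ) * D t with hg
  have hg_ab : IntervalIntegrable g volume a b := by
    have := hint.continuousOn_mul (g := fun t => (x - t) ^ n / (Nat.factorial n : ℝ))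
      (by fun_prop)
    simpa [hg, mul_comm] using this
  have hax : uIcc a x ⊆ uIcc a b := by
    rw [Set.uIcc_of_le hab.le, Set.uIcc_of_le hx.1]
    exact Set.Icc_subset_Icc le_rfl hx.2
  have hxb : uIcc x b ⊆ uIcc a b := by
    rw [Set.uIcc_of_le hab.le, Set.uIcc_of_le hx.2]
    exact Set.Icc_subset_Icc hx.1 le_rfl
  have hg_ax : IntervalIntegrable g volume a x := hg_ab.mono_set hax
  have hg_xb : IntervalIntegrable g volume x b := hg_ab.mono_set hxb
  have T1 := taylor_int f a b hab.le n hn hf hf' hint a x ha hx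
  have T2 := taylor_int f a b hab.le n hn hf hf' hint b x hb hx
  have hsplit : (∫ t in a..b, f t) = (∫ t in a..x, f t) + ∫ t in x..b, f t :=
    (intervalIntegral.integral_add_adjacent_intervals
      (hfc.intervalIntegrable a x) (hfc.intervalIntegrable x b)).symm
  have hflip : (∫ t in x..b, f t) = - ∫ t in b..x, f t :=
    intervalIntegral.integral_symm b x
  have hsum : (∑ k ∈ Finset.range n, (1 / (Nat.factorial (k + 1) : ℝ)) *
        ((x - a) ^ (k + 1) * iteratedDeriv k f a +
          (-1 : ℝ) ^ k * (b - x) ^ (k + 1) * iteratedDeriv k f b))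
      = (∑ k ∈ Finset.range n,
          iteratedDeriv k f a * ((x - a) ^ (k + 1) / (Nat.factorial (k + 1) : ℝ)))
        - (∑ k ∈ Finset.range n,
          iteratedDeriv k f b * ((x - b) ^ (k + 1) / (Nat.factorial (k + 1) : ℝ))) := by
    rw [← Finset.sum_sub_distrib]
    refine Finset.sum_congr rfl fun k _ => ?_
    have hpow : (x - b) ^ (k+1) = (-1:ℝ) ^ (k+1) * (b - x) ^ (k+1) := by
      rw [show x - b = -(b - x) by ring, neg_pow]
    rw [hpow, pow_succ]
    ring
  have key : (∫ t in a..b, f t) -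
      (∑ k ∈ Finset.range n, (1 / (Nat.factorial (k + 1) : ℝ)) *
        ((x - a) ^ (k + 1) * iteratedDeriv k f a +
          (-1 : ℝ) ^ k * (b - x) ^ (k + 1) * iteratedDeriv k f b))
      = (∫ t in a..x, g t) - ∫ t in b..x, g t := by
    rw [hsum, hsplit, hflip, T1, T2]
    ring
  rw [key]
  -- quasi-convexity bounds
  set M1 := max |D a| |D x| with hM1
  set M2 := max |D x| |D b| with hM2
  have hfacpos : (0:ℝ) < (Nat.factorial n : ℝ) := by positivity
  have bound1 : |∫ t in a..x, g t| ≤ M1 * ((x - a) ^ (n+1) / (n+1)) / (Nat.factorial n : ℝ) := by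
    have hax' : a ≤ x := hx.1
    have hptw : ∀ t ∈ Set.Icc a x, |g t| ≤ (x - t) ^ n / (Nat.factorial n : ℝ) * M1 := by
      intro t ht
      have hxt : 0 ≤ x - t := by linarith [ht.2]
      have habs : |g t| = (x - t) ^ n / (Nat.factorial n : ℝ) * |D t| := by
        rw [hg, abs_mul, abs_of_nonneg (by positivity)]
      rw [habs]
      have hDt : |D t| ≤ M1 := by
        rcases eq_or_lt_of_le hax' with h | h
        · have : t = a := le_antisymm (h ▸ ht.2) ht.1
          subst this
          exact le_max_left _ _
        · set α := (x - t) / (x - a) with hα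
          have hα0 : 0 ≤ α := div_nonneg hxt (by linarith)
          have hα1 : α ≤ 1 := by
            rw [hα, div_le_one (by linarith)]
            linarith [ht.1]
          have := hq a ha x hx α ⟨hα0, hα1⟩
          have hmul : α * (x - a) = x - t := div_mul_cancel₀ _ (ne_of_gt (by linarith))
          have heq : α * a + (1 - α) * x = t := by linear_combination -hmul
          rwa [heq] at this
      exact mul_le_mul_of_nonneg_left hDt (by positivity)
    calc |∫ t in a..x, g t| ≤ ∫ t in a..x, |g t| :=
          intervalIntegral.abs_integral_le_integral_abs hax'
      _ ≤ ∫ t in a..x, (x - t) ^ n / (Nat.factorial n : ℝ) * M1 :=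
          intervalIntegral.integral_mono_on hax' hg_ax.abs
            (Continuous.intervalIntegrable (by fun_prop) _ _) hptw
      _ = M1 * ((x - a) ^ (n+1) / (n+1)) / (Nat.factorial n : ℝ) := by
          have : (∫ t in a..x, (x - t) ^ n) = (x - a) ^ (n+1) / (n+1) := by
            have h1 : (∫ t in a..x, (x - t) ^ n) = ∫ s in (x - x)..(x - a), s ^ n := by
              simpa using
                intervalIntegral.integral_comp_sub_left (a := a) (b := x) (fun s : ℝ => s ^ n) x
            rw [h1, integral_pow]
            simp
          rw [show (fun t => (x - t) ^ n / (Nat.factorial n : ℝ) * M1)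
            = fun t => (M1 / (Nat.factorial n : ℝ)) * (x - t) ^ n by funext t; ring]
          rw [intervalIntegral.integral_const_mul, this]
          ring
  have bound2 : |∫ t in b..x, g t| ≤ M2 * ((b - x) ^ (n+1) / (n+1)) / (Nat.factorial n : ℝ) := by
    have hxb' : x ≤ b := hx.2
    rw [intervalIntegral.integral_symm, abs_neg]
    have hptw : ∀ t ∈ Set.Icc x b, |g t| ≤ (t - x) ^ n / (Nat.factorial n : ℝ) * M2 := by
      intro t ht
      have hxt : 0 ≤ t - x := by linarith [ht.1]
      have habs : |g t| = (t - x) ^ n / (Nat.factorial n : ℝ) * |D t| := by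
        rw [hg, abs_mul, abs_div, abs_pow, abs_of_nonneg hfacpos.le,
          show |x - t| = t - x by rw [abs_sub_comm]; exact abs_of_nonneg hxt]
      rw [habs]
      have hDt : |D t| ≤ M2 := by
        rcases eq_or_lt_of_le hxb' with h | h
        · have : t = b := le_antisymm ht.2 (h ▸ ht.1)
          subst this
          exact le_max_right _ _
        · set α := (b - t) / (b - x) with hα
          have hα0 : 0 ≤ α := div_nonneg (by linarith [ht.2]) (by linarith)
          have hα1 : α ≤ 1 := by
            rw [hα, div_le_one (by linarith)]
            linarith [ht.1]
          have := hq x hx b hb α ⟨hα0, hα1⟩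
          have hmul : α * (b - x) = b - t := div_mul_cancel₀ _ (ne_of_gt (by linarith))
          have heq : α * x + (1 - α) * b = t := by linear_combination -hmul
          rwa [heq] at this
      exact mul_le_mul_of_nonneg_left hDt (by positivity)
    calc |∫ t in x..b, g t| ≤ ∫ t in x..b, |g t| :=
          intervalIntegral.abs_integral_le_integral_abs hxb'
      _ ≤ ∫ t in x..b, (t - x) ^ n / (Nat.factorial n : ℝ) * M2 :=
          intervalIntegral.integral_mono_on hxb' hg_xb.abs
            (Continuous.intervalIntegrable (by fun_prop) _ _) hptw
      _ = M2 * ((b - x) ^ (n+1) / (n+1)) / (Nat.factorial n : ℝ) := by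
          have : (∫ t in x..b, (t - x) ^ n) = (b - x) ^ (n+1) / (n+1) := by
            have h1 : (∫ t in x..b, (t - x) ^ n) = ∫ s in (x - x)..(b - x), s ^ n := by
              simpa using
                intervalIntegral.integral_comp_sub_right (a := x) (b := b) (fun s : ℝ => s ^ n) x
            rw [h1, integral_pow]
            simp
          rw [show (fun t => (t - x) ^ n / (Nat.factorial n : ℝ) * M2)
            = fun t => (M2 / (Nat.factorial n : ℝ)) * (t - x) ^ n by funext t; ring]
          rw [intervalIntegral.integral_const_mul, this]
          ring
  calc |(∫ t in a..x, g t) - ∫ t in b..x, g t|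
      ≤ |∫ t in a..x, g t| + |∫ t in b..x, g t| := abs_sub _ _
    _ ≤ M1 * ((x - a) ^ (n+1) / (n+1)) / (Nat.factorial n : ℝ)
        + M2 * ((b - x) ^ (n+1) / (n+1)) / (Nat.factorial n : ℝ) := add_le_add bound1 bound2
    _ = (1 / (Nat.factorial n : ℝ)) *
        (M1 * ((x - a) ^ (n + 1) / (n + 1)) + M2 * ((b - x) ^ (n + 1) / (n + 1))) := by ring
end

section
/- Let f : [a,b] → ℝ be such that f^{(n-1)} (n ≥ 1) is absolutely continuous on [a,b] and |f^{(n)}| is quasi-convex on [a,b]. Then |∫_a^b f(t) dt - Σ_{k=0}^{n-1} (1/(k+1)!)((b-a)/2)^{k+1}[f^{(k)}(a) + (-1)^k f^{(k)}(b)]| ≤ ((b-a)^{n+1}/(2^{n+1}(n+1)!))·{max{|f^{(n)}(a)|, |f^{(n)}((a+b)/2)|} + max{|f^{(n)}((a+b)/2)|, |f^{(n)}(b)|}}. -/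
set_option maxHeartbeats 1000000


open MeasureTheory Set

lemma aux_key (f : ℝ → ℝ) (c d p : ℝ) (n : ℕ)
    (hderiv : ∀ k, k < n → ∀ t ∈ Set.uIcc c d,
      HasDerivAt (iteratedDeriv k f) (iteratedDeriv (k+1) f t) t)
    (hint : ∀ k, k ≤ n → IntervalIntegrable (iteratedDeriv k f) volume c d) :
    (∫ t in c..d, f t) =
      (∑ k ∈ Finset.range n, (-1:ℝ)^k *
        ((d-p)^(k+1)/(Nat.factorial (k+1) : ℝ) * iteratedDeriv k f d
          - (c-p)^(k+1)/(Nat.factorial (k+1) : ℝ) * iteratedDeriv k f c))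
      + (-1:ℝ)^n * ∫ t in c..d, (t-p)^n/(Nat.factorial n : ℝ) * iteratedDeriv n f t := by
  induction n with
  | zero => simp
  | succ n ih =>
    have IH := ih (fun k hk => hderiv k (Nat.lt_succ_of_lt hk))
      (fun k hk => hint k (le_trans hk (Nat.le_succ n)))
    rw [IH]
    have hu : ∀ t ∈ Set.uIcc c d,
        HasDerivAt (fun t => (t-p)^(n+1)/(Nat.factorial (n+1) : ℝ))
          ((t-p)^n/(Nat.factorial n : ℝ)) t := by
      intro t _
      have h1 : HasDerivAt (fun t : ℝ => (t-p)^(n+1))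
          ((n+1 : ℕ) * (t-p)^n * 1) t := ((hasDerivAt_id t).sub_const p).pow (n+1)
      have h2 := h1.div_const (Nat.factorial (n+1) : ℝ)
      refine h2.congr_deriv ?_
      have : (Nat.factorial (n+1) : ℝ) = (n+1 : ℕ) * (Nat.factorial n : ℝ) := by
        push_cast [Nat.factorial_succ]; ring
      rw [this]
      have hn0 : (Nat.factorial n : ℝ) ≠ 0 := Nat.cast_ne_zero.mpr (Nat.factorial_ne_zero n)
      have hn1 : ((n:ℝ)+1) ≠ 0 := by positivity
      field_simp
    have hu' : IntervalIntegrable (fun t : ℝ => (t-p)^n/(Nat.factorial n : ℝ)) volume c d :=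
      ((((continuous_id.sub continuous_const).pow n).div_const _).intervalIntegrable c d)
    have ibp := intervalIntegral.integral_mul_deriv_eq_deriv_mul hu (hderiv n (Nat.lt_succ_self n))
      hu' (hint (n+1) le_rfl)
    have key : (∫ t in c..d, (t-p)^n/(Nat.factorial n : ℝ) * iteratedDeriv n f t)
        = ((d-p)^(n+1)/(Nat.factorial (n+1) : ℝ) * iteratedDeriv n f d
          - (c-p)^(n+1)/(Nat.factorial (n+1) : ℝ) * iteratedDeriv n f c)
          - ∫ t in c..d, (t-p)^(n+1)/(Nat.factorial (n+1) : ℝ) * iteratedDeriv (n+1) f t := by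
      rw [eq_sub_iff_add_eq]
      linarith [ibp]
    rw [key, Finset.sum_range_succ]
    ring

theorem stmt_3 (f : ℝ → ℝ) (a b : ℝ) (hab : a < b) (n : ℕ) (hn : 1 ≤ n)
    (hf : ContDiff ℝ ((n - 1 : ℕ) : ℕ∞) f)
    (hf' : ∀ t ∈ Set.Icc a b,
      HasDerivAt (iteratedDeriv (n - 1) f) (iteratedDeriv n f t) t)
    (hint : IntervalIntegrable (iteratedDeriv n f) volume a b)
    (hq : ∀ u ∈ Set.Icc a b, ∀ v ∈ Set.Icc a b, ∀ α ∈ Set.Icc (0 : ℝ) 1,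
      |iteratedDeriv n f (α * u + (1 - α) * v)| ≤
        max |iteratedDeriv n f u| |iteratedDeriv n f v|) :
    |(∫ t in a..b, f t) -
      ∑ k ∈ Finset.range n, (1 / (Nat.factorial (k + 1) : ℝ)) *
        ((b - a) / 2) ^ (k + 1) *
          (iteratedDeriv k f a + (-1 : ℝ) ^ k * iteratedDeriv k f b)| ≤
    ((b - a) ^ (n + 1) / (2 ^ (n + 1) * (Nat.factorial (n + 1) : ℝ))) *
      (max |iteratedDeriv n f a| |iteratedDeriv n f ((a + b) / 2)| +
       max |iteratedDeriv n f ((a + b) / 2)| |iteratedDeriv n f b|) := by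
  obtain ⟨N, rfl⟩ : ∃ N, n = N + 1 := ⟨n - 1, (Nat.succ_pred_eq_of_pos hn).symm⟩
  simp only [Nat.add_sub_cancel] at hf hf'
  set n := N + 1 with hnN
  set m : ℝ := (a + b) / 2 with hm
  set h : ℝ := (b - a) / 2 with hh
  have hh0 : 0 < h := by simp [hh]; linarith
  have ham : a < m := by simp [hm]; linarith
  have hmb : m < b := by simp [hm]; linarith
  have hamm : a - m = -h := by rw [hm, hh]; ring
  have hbm : b - m = h := by rw [hm, hh]; ring
  -- derivative and integrability hypotheses on [a,b]
  have hderiv : ∀ k, k < n → ∀ t ∈ Set.Icc a b,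
      HasDerivAt (iteratedDeriv k f) (iteratedDeriv (k+1) f t) t := by
    intro k hk t ht
    rcases Nat.lt_succ_iff_lt_or_eq.mp hk with hk' | rfl
    · have hd : Differentiable ℝ (iteratedDeriv k f) :=
        hf.differentiable_iteratedDeriv k (by exact_mod_cast hk')
      have h2 := (hd t).hasDerivAt
      rw [iteratedDeriv_succ]
      exact h2
    · exact hf' t ht
  have hintk : ∀ k, k ≤ n → IntervalIntegrable (iteratedDeriv k f) volume a b := by
    intro k hk
    by_cases hk' : k = n
    · subst hk'; exact hint
    · have hkN : k ≤ N := by omega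
      exact ((hf.continuous_iteratedDeriv k (by exact_mod_cast hkN))).intervalIntegrable a b
  have hsub1 : Set.uIcc a m ⊆ Set.Icc a b := by
    rw [Set.uIcc_of_le ham.le]
    exact Set.Icc_subset_Icc le_rfl hmb.le
  have hsub2 : Set.uIcc m b ⊆ Set.Icc a b := by
    rw [Set.uIcc_of_le hmb.le]
    exact Set.Icc_subset_Icc ham.le le_rfl
  have hsub1' : Set.uIcc a m ⊆ Set.uIcc a b := by
    rw [Set.uIcc_of_le hab.le]; exact hsub1
  have hsub2' : Set.uIcc m b ⊆ Set.uIcc a b := by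
    rw [Set.uIcc_of_le hab.le]; exact hsub2
  have key1 := aux_key f a m m n
    (fun k hk t ht => hderiv k hk t (hsub1 ht))
    (fun k hk => (hintk k hk).mono_set hsub1')
  have key2 := aux_key f m b m n
    (fun k hk t ht => hderiv k hk t (hsub2 ht))
    (fun k hk => (hintk k hk).mono_set hsub2')
  set J : ℝ := ∫ t in a..m, (t-m)^n/(Nat.factorial n : ℝ) * iteratedDeriv n f t with hJ
  set L : ℝ := ∫ t in m..b, (t-m)^n/(Nat.factorial n : ℝ) * iteratedDeriv n f t with hL
  have hfc : Continuous f := hf.continuous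
  have hsplit : (∫ t in a..b, f t) = (∫ t in a..m, f t) + ∫ t in m..b, f t :=
    (intervalIntegral.integral_add_adjacent_intervals
      (hfc.intervalIntegrable a m) (hfc.intervalIntegrable m b)).symm
  have hsum : (∑ k ∈ Finset.range n, (-1:ℝ)^k *
        ((m-m)^(k+1)/(Nat.factorial (k+1) : ℝ) * iteratedDeriv k f m
          - (a-m)^(k+1)/(Nat.factorial (k+1) : ℝ) * iteratedDeriv k f a))
      + (∑ k ∈ Finset.range n, (-1:ℝ)^k *
        ((b-m)^(k+1)/(Nat.factorial (k+1) : ℝ) * iteratedDeriv k f b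
          - (m-m)^(k+1)/(Nat.factorial (k+1) : ℝ) * iteratedDeriv k f m))
      = ∑ k ∈ Finset.range n, (1 / (Nat.factorial (k + 1) : ℝ)) *
        ((b - a) / 2) ^ (k + 1) *
          (iteratedDeriv k f a + (-1 : ℝ) ^ k * iteratedDeriv k f b) := by
    rw [← Finset.sum_add_distrib]
    refine Finset.sum_congr rfl fun k _ => ?_
    rw [hamm, hbm, sub_self, ← hh]
    have hz : (0:ℝ)^(k+1) = 0 := zero_pow (Nat.succ_ne_zero k)
    rcases Nat.even_or_odd k with he | ho
    · rw [hz, he.neg_one_pow, (he.add_one).neg_pow]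
      ring
    · rw [hz, ho.neg_one_pow, (Odd.add_one ho).neg_pow]
      ring
  have hid : (∫ t in a..b, f t) -
      (∑ k ∈ Finset.range n, (1 / (Nat.factorial (k + 1) : ℝ)) *
        ((b - a) / 2) ^ (k + 1) *
          (iteratedDeriv k f a + (-1 : ℝ) ^ k * iteratedDeriv k f b))
      = (-1:ℝ)^n * (J + L) := by
    rw [hsplit, key1, key2, ← hsum]; ring
  rw [hid, abs_mul, abs_pow, abs_neg, abs_one, one_pow, one_mul]
  -- now bound |J + L|
  set M1 : ℝ := max |iteratedDeriv n f a| |iteratedDeriv n f m| with hM1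
  set M2 : ℝ := max |iteratedDeriv n f m| |iteratedDeriv n f b| with hM2
  have hfac0 : (0:ℝ) < (Nat.factorial n : ℝ) := by
    exact_mod_cast Nat.factorial_pos n
  have haI : a ∈ Set.Icc a b := ⟨le_rfl, hab.le⟩
  have hbI : b ∈ Set.Icc a b := ⟨hab.le, le_rfl⟩
  have hmI : m ∈ Set.Icc a b := ⟨ham.le, hmb.le⟩
  -- pointwise bounds
  have hbd1 : ∀ t ∈ Set.Icc a m, |iteratedDeriv n f t| ≤ M1 := by
    intro t ⟨ht1, ht2⟩
    have hma : 0 < m - a := by linarith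
    set α : ℝ := (m - t) / (m - a) with hα
    have hα0 : 0 ≤ α := div_nonneg (by linarith) hma.le
    have hα1 : α ≤ 1 := by
      rw [div_le_one hma]; linarith
    have hpt : α * a + (1 - α) * m = t := by
      rw [hα]; field_simp [hma.ne']
      ring
    have := hq a haI m hmI α ⟨hα0, hα1⟩
    rwa [hpt] at this
  have hbd2 : ∀ t ∈ Set.Icc m b, |iteratedDeriv n f t| ≤ M2 := by
    intro t ⟨ht1, ht2⟩
    have hbm' : 0 < b - m := by linarith
    set α : ℝ := (b - t) / (b - m) with hα
    have hα0 : 0 ≤ α := div_nonneg (by linarith) hbm'.le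
    have hα1 : α ≤ 1 := by
      rw [div_le_one hbm']; linarith
    have hpt : α * m + (1 - α) * b = t := by
      rw [hα]; field_simp [hbm'.ne']
      ring
    have := hq m hmI b hbI α ⟨hα0, hα1⟩
    rwa [hpt] at this
  have hM10 : 0 ≤ M1 := le_trans (abs_nonneg _) (le_max_left _ _)
  have hM20 : 0 ≤ M2 := le_trans (abs_nonneg _) (le_max_right _ _)
  -- integrability pieces
  have hint1 : IntervalIntegrable (fun t => (t-m)^n/(Nat.factorial n : ℝ) * iteratedDeriv n f t)
      volume a m := by
    exact (hint.mono_set hsub1').continuousOn_mul (by fun_prop)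
  have hint2 : IntervalIntegrable (fun t => (t-m)^n/(Nat.factorial n : ℝ) * iteratedDeriv n f t)
      volume m b := by
    exact (hint.mono_set hsub2').continuousOn_mul (by fun_prop)
  -- the polynomial integrals
  have hpoly1 : (∫ t in a..m, (m-t)^n) = h^(n+1) / (n+1) := by
    have := intervalIntegral.integral_comp_sub_left (a := a) (b := m) (fun x => x^n) m
    rw [this, sub_self]
    rw [integral_pow]
    have : m - a = h := by rw [hm, hh]; ring
    rw [this]
    simp
  have hpoly2 : (∫ t in m..b, (t-m)^n) = h^(n+1) / (n+1) := by
    have := intervalIntegral.integral_comp_sub_right (a := m) (b := b) (fun x => x^n) m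
    rw [this, sub_self]
    rw [integral_pow]
    rw [hbm]
    simp
  have hJbd : |J| ≤ M1 * (h^(n+1) / ((n+1) * (Nat.factorial n : ℝ))) := by
    have h1 : |J| ≤ ∫ t in a..m, |(t-m)^n/(Nat.factorial n : ℝ) * iteratedDeriv n f t| :=
      intervalIntegral.abs_integral_le_integral_abs ham.le
    have h2 : (∫ t in a..m, |(t-m)^n/(Nat.factorial n : ℝ) * iteratedDeriv n f t|)
        ≤ ∫ t in a..m, (m-t)^n * (M1 / (Nat.factorial n : ℝ)) := by
      apply intervalIntegral.integral_mono_on ham.le hint1.abs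
      · exact ((((continuous_const.sub continuous_id).pow n).mul continuous_const).intervalIntegrable a m)
      · intro t ht
        have habs : |(t-m)^n/(Nat.factorial n : ℝ) * iteratedDeriv n f t|
            = (m-t)^n / (Nat.factorial n : ℝ) * |iteratedDeriv n f t| := by
          rw [abs_mul, abs_div, abs_pow, abs_of_pos hfac0]
          congr 2
          rw [abs_sub_comm, abs_of_nonneg (by linarith [ht.2])]
        rw [habs]
        have := hbd1 t ht
        have hpow : (0:ℝ) ≤ (m-t)^n := pow_nonneg (by linarith [ht.2]) n
        rw [div_mul_eq_mul_div, mul_div_assoc]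
        exact mul_le_mul_of_nonneg_left ((div_le_div_iff_of_pos_right hfac0).mpr this) hpow
    calc |J| ≤ ∫ t in a..m, (m-t)^n * (M1 / (Nat.factorial n : ℝ)) := h1.trans h2
      _ = (h^(n+1) / (n+1)) * (M1 / (Nat.factorial n : ℝ)) := by
          rw [intervalIntegral.integral_mul_const, hpoly1]
      _ = M1 * (h^(n+1) / ((n+1) * (Nat.factorial n : ℝ))) := by
          field_simp
          try ring
  have hLbd : |L| ≤ M2 * (h^(n+1) / ((n+1) * (Nat.factorial n : ℝ))) := by
    have h1 : |L| ≤ ∫ t in m..b, |(t-m)^n/(Nat.factorial n : ℝ) * iteratedDeriv n f t| :=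
      intervalIntegral.abs_integral_le_integral_abs hmb.le
    have h2 : (∫ t in m..b, |(t-m)^n/(Nat.factorial n : ℝ) * iteratedDeriv n f t|)
        ≤ ∫ t in m..b, (t-m)^n * (M2 / (Nat.factorial n : ℝ)) := by
      apply intervalIntegral.integral_mono_on hmb.le hint2.abs
      · exact ((((continuous_id.sub continuous_const).pow n).mul continuous_const).intervalIntegrable m b)
      · intro t ht
        have habs : |(t-m)^n/(Nat.factorial n : ℝ) * iteratedDeriv n f t|
            = (t-m)^n / (Nat.factorial n : ℝ) * |iteratedDeriv n f t| := by
          rw [abs_mul, abs_div, abs_pow, abs_of_pos hfac0]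
          congr 2
          rw [abs_of_nonneg (by linarith [ht.1])]
        rw [habs]
        have := hbd2 t ht
        have hpow : (0:ℝ) ≤ (t-m)^n := pow_nonneg (by linarith [ht.1]) n
        rw [div_mul_eq_mul_div, mul_div_assoc]
        exact mul_le_mul_of_nonneg_left ((div_le_div_iff_of_pos_right hfac0).mpr this) hpow
    calc |L| ≤ ∫ t in m..b, (t-m)^n * (M2 / (Nat.factorial n : ℝ)) := h1.trans h2
      _ = (h^(n+1) / (n+1)) * (M2 / (Nat.factorial n : ℝ)) := by
          rw [intervalIntegral.integral_mul_const, hpoly2]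
      _ = M2 * (h^(n+1) / ((n+1) * (Nat.factorial n : ℝ))) := by
          field_simp
          try ring
  have hrw : ((b - a) ^ (n + 1) / (2 ^ (n + 1) * (Nat.factorial (n + 1) : ℝ)))
      = h^(n+1) / ((n+1) * (Nat.factorial n : ℝ)) := by
    rw [hh, div_pow, Nat.factorial_succ]
    push_cast
    have h2 : ((2:ℝ))^(n+1) ≠ 0 := by positivity
    have h3 : (Nat.factorial n : ℝ) ≠ 0 := hfac0.ne'
    field_simp
    try ring
  rw [hrw]
  calc |J + L| ≤ |J| + |L| := abs_add_le _ _
    _ ≤ M1 * (h^(n+1) / ((n+1) * (Nat.factorial n : ℝ)))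
        + M2 * (h^(n+1) / ((n+1) * (Nat.factorial n : ℝ))) := add_le_add hJbd hLbd
    _ = h^(n+1) / ((n+1) * (Nat.factorial n : ℝ)) * (M1 + M2) := by ring
end

section
/- Let f : [a,b] → ℝ be such that f^{(n-1)} (n ≥ 1) is absolutely continuous on [a,b] and |f^{(n)}|^q is quasi-convex on [a,b], where p > 1 and 1/p + 1/q = 1. Then for all x ∈ [a,b]: |∫_a^b f(t) dt - Σ_{k=0}^{n-1} (1/(k+1)!)[(x-a)^{k+1} f^{(k)}(a) + (-1)^k (b-x)^{k+1} f^{(k)}(b)]| ≤ ((b-a)^{1/q}/n!)·(((x-a)^{np+1} + (b-x)^{np+1})/(np+1))^{1/p}·(max{|f^{(n)}(a)|^q, |f^{(n)}(b)|^q})^{1/q}. -/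
open MeasureTheory Set

lemma my_ident (f : ℝ → ℝ) (a b x : ℝ) (hab : a ≤ b)
    (n : ℕ) (hn : 1 ≤ n)
    (hder : ∀ m : ℕ, m + 1 ≤ n → ∀ t ∈ Set.Icc a b,
      HasDerivAt (iteratedDeriv m f) (iteratedDeriv (m + 1) f t) t)
    (hintm : ∀ m : ℕ, 1 ≤ m → m ≤ n → IntervalIntegrable (iteratedDeriv m f) volume a b) :
    (∫ t in a..b, f t) =
      (∑ k ∈ Finset.range n, (1 / (Nat.factorial (k + 1) : ℝ)) *
        ((x - a) ^ (k + 1) * iteratedDeriv k f a +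
          (-1 : ℝ) ^ k * (b - x) ^ (k + 1) * iteratedDeriv k f b))
      + (-1 : ℝ) ^ n / (Nat.factorial n : ℝ) *
        ∫ t in a..b, (t - x) ^ n * iteratedDeriv n f t := by
  have huIcc : Set.uIcc a b = Set.Icc a b := Set.uIcc_of_le hab
  have ibp : ∀ m : ℕ, m + 1 ≤ n →
      (∫ t in a..b, (t - x) ^ m * iteratedDeriv m f t)
      = (b - x) ^ (m + 1) / ((m : ℝ) + 1) * iteratedDeriv m f b
        - (a - x) ^ (m + 1) / ((m : ℝ) + 1) * iteratedDeriv m f a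
        - (1 / ((m : ℝ) + 1)) * ∫ t in a..b, (t - x) ^ (m + 1) * iteratedDeriv (m + 1) f t := by
    intro m hm
    have hm1 : ((m : ℝ) + 1) ≠ 0 := by positivity
    have hu : ∀ t ∈ Set.uIcc a b,
        HasDerivAt (fun t => (t - x) ^ (m + 1) / ((m : ℝ) + 1)) ((t - x) ^ m) t := by
      intro t _
      have h1 : HasDerivAt (fun t : ℝ => (t - x) ^ (m + 1))
          ((m + 1 : ℕ) * (t - x) ^ (m + 1 - 1) * 1) t :=
        ((hasDerivAt_id t).sub_const x).pow (m + 1)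
      have h2 := h1.div_const ((m : ℝ) + 1)
      exact h2.congr_deriv (by rw [Nat.add_sub_cancel]; push_cast; field_simp)
    have hv : ∀ t ∈ Set.uIcc a b,
        HasDerivAt (iteratedDeriv m f) (iteratedDeriv (m + 1) f t) t := by
      rw [huIcc]; exact hder m hm
    have hu' : IntervalIntegrable (fun t => (t - x) ^ m) volume a b :=
      ((continuous_id.sub continuous_const).pow m).intervalIntegrable a b
    have hv' := hintm (m + 1) (Nat.le_add_left 1 m) hm
    have key := intervalIntegral.integral_mul_deriv_eq_deriv_mul hu hv hu' hv'
    have hpull : (∫ t in a..b, (t - x) ^ (m + 1) / ((m : ℝ) + 1) * iteratedDeriv (m + 1) f t)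
        = (1 / ((m : ℝ) + 1)) * ∫ t in a..b, (t - x) ^ (m + 1) * iteratedDeriv (m + 1) f t := by
      rw [← intervalIntegral.integral_const_mul]
      apply intervalIntegral.integral_congr
      intro t _
      ring
    rw [hpull] at key
    linarith [key]
  have key : ∀ m : ℕ, 1 ≤ m → m ≤ n →
      (∫ t in a..b, f t) =
        (∑ k ∈ Finset.range m, (1 / (Nat.factorial (k + 1) : ℝ)) *
          ((x - a) ^ (k + 1) * iteratedDeriv k f a +
            (-1 : ℝ) ^ k * (b - x) ^ (k + 1) * iteratedDeriv k f b))
        + (-1 : ℝ) ^ m / (Nat.factorial m : ℝ) *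
          ∫ t in a..b, (t - x) ^ m * iteratedDeriv m f t := by
    intro m hm
    induction m, hm using Nat.le_induction with
    | base =>
      intro _
      have h0 := ibp 0 hn
      simp only [pow_zero, one_mul, iteratedDeriv_zero, Nat.cast_zero, zero_add, pow_one,
        div_one, one_div] at h0
      simp only [Finset.sum_range_one, pow_zero, pow_one, Nat.factorial_one, Nat.cast_one,
        iteratedDeriv_zero, one_div, inv_one, one_mul]
      rw [h0]
      norm_num [Nat.factorial]
      ring
    | succ m hm ih =>
      intro hmn
      have h1 : m ≤ n := le_of_lt (Nat.lt_of_succ_le hmn)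
      have e := ibp m hmn
      rw [Finset.sum_range_succ, ih h1, e]
      have hfac : ((m + 1).factorial : ℝ) = ((m : ℝ) + 1) * (m.factorial : ℝ) := by
        rw [Nat.factorial_succ]; push_cast; ring
      have hax : (x - a) ^ (m + 1) = (-1 : ℝ) ^ (m + 1) * (a - x) ^ (m + 1) := by
        rw [← mul_pow]
        congr 1
        ring
      have hm0 : (m.factorial : ℝ) ≠ 0 := Nat.cast_ne_zero.mpr m.factorial_ne_zero
      have hm1 : ((m : ℝ) + 1) ≠ 0 := by positivity
      rw [hax, hfac, pow_succ]
      field_simp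
      ring
  exact key n hn le_rfl
lemma my_ker (a b x r : ℝ) (hab : a ≤ b) (hx : x ∈ Set.Icc a b) (hr : 0 < r) :
    (∫ t in a..b, |t - x| ^ r) = ((x - a) ^ (r + 1) + (b - x) ^ (r + 1)) / (r + 1) := by
  have hc : Continuous fun t : ℝ => |t - x| ^ r :=
    ((continuous_id.sub continuous_const).abs).rpow_const fun t => Or.inr hr.le
  obtain ⟨hax, hxb⟩ := hx
  have h1 : (∫ t in a..x, |t - x| ^ r) = (x - a) ^ (r + 1) / (r + 1) := by
    have e : (∫ t in a..x, |t - x| ^ r) = ∫ t in a..x, (fun s => s ^ r) (x - t) := by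
      apply intervalIntegral.integral_congr
      intro t ht
      rw [Set.uIcc_of_le hax] at ht
      simp only
      rw [abs_of_nonpos (by linarith [ht.2]), neg_sub]
    rw [e, intervalIntegral.integral_comp_sub_left (fun s => s ^ r) x, sub_self,
      integral_rpow (Or.inl (by linarith)), Real.zero_rpow (by positivity)]
    ring
  have h2 : (∫ t in x..b, |t - x| ^ r) = (b - x) ^ (r + 1) / (r + 1) := by
    have e : (∫ t in x..b, |t - x| ^ r) = ∫ t in x..b, (fun s => s ^ r) (t - x) := by
      apply intervalIntegral.integral_congr
      intro t ht
      rw [Set.uIcc_of_le hxb] at ht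
      simp only
      rw [abs_of_nonneg (by linarith [ht.1])]
    rw [e, intervalIntegral.integral_comp_sub_right (fun s => s ^ r) x, sub_self,
      integral_rpow (Or.inl (by linarith)), Real.zero_rpow (by positivity)]
    ring
  rw [← intervalIntegral.integral_add_adjacent_intervals
    (hc.intervalIntegrable a x) (hc.intervalIntegrable x b), h1, h2]
  ring

theorem stmt_4 (f : ℝ → ℝ) (a b : ℝ) (hab : a < b) (n : ℕ) (hn : 1 ≤ n)
    (p q : ℝ) (hp : 1 < p) (hpq : 1 / p + 1 / q = 1)
    (hf : ContDiff ℝ ((n - 1 : ℕ) : ℕ∞) f)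
    (hf' : ∀ t ∈ Set.Icc a b,
      HasDerivAt (iteratedDeriv (n - 1) f) (iteratedDeriv n f t) t)
    (hint : IntervalIntegrable (iteratedDeriv n f) volume a b)
    (hq : ∀ u ∈ Set.Icc a b, ∀ v ∈ Set.Icc a b, ∀ α ∈ Set.Icc (0 : ℝ) 1,
      |iteratedDeriv n f (α * u + (1 - α) * v)| ^ q ≤
        max (|iteratedDeriv n f u| ^ q) (|iteratedDeriv n f v| ^ q))
    (x : ℝ) (hx : x ∈ Set.Icc a b) :
    |(∫ t in a..b, f t) -
      ∑ k ∈ Finset.range n, (1 / (Nat.factorial (k + 1) : ℝ)) *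
        ((x - a) ^ (k + 1) * iteratedDeriv k f a +
          (-1 : ℝ) ^ k * (b - x) ^ (k + 1) * iteratedDeriv k f b)| ≤
    ((b - a) ^ (1 / q) / (Nat.factorial n : ℝ)) *
      (((x - a) ^ ((n : ℝ) * p + 1) + (b - x) ^ ((n : ℝ) * p + 1)) / ((n : ℝ) * p + 1)) ^ (1 / p) *
      (max (|iteratedDeriv n f a| ^ q) (|iteratedDeriv n f b| ^ q)) ^ (1 / q) := by
  obtain ⟨hax, hxb⟩ := hx
  have hab' : a ≤ b := hab.le
  have hder : ∀ m : ℕ, m + 1 ≤ n → ∀ t ∈ Set.Icc a b,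
      HasDerivAt (iteratedDeriv m f) (iteratedDeriv (m + 1) f t) t := by
    intro m hm t ht
    rcases eq_or_lt_of_le hm with h | h
    · obtain rfl : m = n - 1 := by omega
      rw [show n - 1 + 1 = n from by omega]
      exact hf' t ht
    · have hd : Differentiable ℝ (iteratedDeriv m f) := by
        apply hf.differentiable_iteratedDeriv m
        exact_mod_cast (by omega : m < n - 1)
      rw [iteratedDeriv_succ]
      exact (hd t).hasDerivAt
  have hintm : ∀ m : ℕ, 1 ≤ m → m ≤ n → IntervalIntegrable (iteratedDeriv m f) volume a b := by
    intro m _ hm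
    rcases eq_or_lt_of_le hm with h | h
    · rw [h]; exact hint
    · exact (hf.continuous_iteratedDeriv m
        (by exact_mod_cast (by omega : m ≤ n - 1))).intervalIntegrable a b
  rw [my_ident f a b x hab' n hn hder hintm, add_sub_cancel_left, abs_mul, abs_div, abs_pow,
    abs_neg, abs_one, one_pow, Nat.abs_cast]
  have hconj : Real.HolderConjugate p q := (Real.holderConjugate_iff).mpr ⟨hp, by simpa [one_div] using hpq⟩
  have hq1 : 1 < q := (Real.holderConjugate_iff.mp hconj.symm).1
  have hq0 : 0 < q := lt_trans one_pos hq1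
  have hp0 : 0 < p := lt_trans one_pos hp
  set M := max (|iteratedDeriv n f a| ^ q) (|iteratedDeriv n f b| ^ q) with hM
  have hM0 : 0 ≤ M := le_trans (Real.rpow_nonneg (abs_nonneg _) q) (le_max_left _ _)
  have hbound : ∀ t ∈ Set.Icc a b, |iteratedDeriv n f t| ^ q ≤ M := by
    intro t ht
    have hba : (0:ℝ) < b - a := by linarith
    have hα : (t - a) / (b - a) ∈ Set.Icc (0:ℝ) 1 :=
      ⟨div_nonneg (by linarith [ht.1]) hba.le, (div_le_one hba).mpr (by linarith [ht.2])⟩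
    have h := hq b (Set.right_mem_Icc.mpr hab') a (Set.left_mem_Icc.mpr hab') _ hα
    have harg : (t - a) / (b - a) * b + (1 - (t - a) / (b - a)) * a = t := by
      field_simp
      ring
    rw [harg] at h
    exact h.trans_eq (max_comm _ _)
  have hbound' : ∀ t ∈ Set.Icc a b, |iteratedDeriv n f t| ≤ M ^ (1 / q) := by
    intro t ht
    have h1 : |iteratedDeriv n f t| = (|iteratedDeriv n f t| ^ q) ^ (1 / q) := by
      rw [← Real.rpow_mul (abs_nonneg _), mul_one_div_cancel (ne_of_gt hq0), Real.rpow_one]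
    rw [h1]
    exact Real.rpow_le_rpow (Real.rpow_nonneg (abs_nonneg _) _) (hbound t ht) (by positivity)
  have hmeas : Measurable (iteratedDeriv n f) := by
    have h : iteratedDeriv n f = deriv (iteratedDeriv (n - 1) f) := by
      conv_lhs => rw [show n = (n - 1) + 1 from by omega]
      rw [iteratedDeriv_succ]
    rw [h]; exact measurable_deriv _
  set μ := volume.restrict (Set.Ioc a b) with hμ
  haveI : IsFiniteMeasure μ := ⟨by rw [Measure.restrict_apply_univ]; exact measure_Ioc_lt_top⟩
  have hmemK : MemLp (fun t => |t - x| ^ n) (ENNReal.ofReal p) μ := by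
    apply MemLp.of_bound (((continuous_id.sub continuous_const).abs.pow n).aestronglyMeasurable)
      ((b - a) ^ n)
    filter_upwards [ae_restrict_mem measurableSet_Ioc] with t ht
    rw [Real.norm_eq_abs, abs_of_nonneg (pow_nonneg (abs_nonneg _) _)]
    apply pow_le_pow_left₀ (abs_nonneg _)
    rw [abs_le]
    obtain ⟨ht1, ht2⟩ := ht
    simp only [Pi.sub_apply, id_eq]
    constructor <;> linarith
  have hmemG : MemLp (fun t => |iteratedDeriv n f t|) (ENNReal.ofReal q) μ := by
    apply MemLp.of_bound hmeas.abs.aestronglyMeasurable (M ^ (1 / q))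
    filter_upwards [ae_restrict_mem measurableSet_Ioc] with t ht
    rw [Real.norm_eq_abs, abs_abs]
    exact hbound' t (Set.Ioc_subset_Icc_self ht)
  have holder := MeasureTheory.integral_mul_le_Lp_mul_Lq_of_nonneg hconj
      (f := fun t => |t - x| ^ n) (g := fun t => |iteratedDeriv n f t|)
      (Filter.Eventually.of_forall fun t => by positivity)
      (Filter.Eventually.of_forall fun t => abs_nonneg _) hmemK hmemG
  have hn0 : 0 < (n:ℝ) := by exact_mod_cast hn
  have hrpos : 0 < (n:ℝ) * p := by positivity
  have hKerEq : (∫ t, (|t - x| ^ n) ^ p ∂μ)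
      = ((x - a) ^ ((n:ℝ) * p + 1) + (b - x) ^ ((n:ℝ) * p + 1)) / ((n:ℝ) * p + 1) := by
    have hpt : ∀ t : ℝ, (|t - x| ^ n) ^ p = |t - x| ^ ((n:ℝ) * p) := fun t => by
      rw [← Real.rpow_natCast |t - x| n, ← Real.rpow_mul (abs_nonneg _)]
    simp only [hpt]
    rw [hμ, show (∫ t in Set.Ioc a b, |t - x| ^ ((n:ℝ) * p) ∂volume)
        = ∫ t in a..b, |t - x| ^ ((n:ℝ) * p) from (intervalIntegral.integral_of_le hab').symm]
    exact my_ker a b x ((n:ℝ) * p) hab' ⟨hax, hxb⟩ hrpos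
  rw [hKerEq] at holder
  have hGle : (∫ t, |iteratedDeriv n f t| ^ q ∂μ) ≤ (b - a) * M := by
    have hIntg : IntegrableOn (fun t => |iteratedDeriv n f t| ^ q) (Set.Ioc a b) volume := by
      apply Integrable.mono' (integrable_const M)
      · exact ((Real.continuous_rpow_const hq0.le).measurable.comp
          hmeas.abs).aestronglyMeasurable
      · filter_upwards [ae_restrict_mem measurableSet_Ioc] with t ht
        rw [Real.norm_eq_abs, abs_of_nonneg (Real.rpow_nonneg (abs_nonneg _) _)]
        exact hbound t (Set.Ioc_subset_Icc_self ht)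
    calc (∫ t, |iteratedDeriv n f t| ^ q ∂μ) ≤ ∫ _ in Set.Ioc a b, M ∂volume :=
          setIntegral_mono_on hIntg ((integrableOn_const_iff).mpr (Or.inr measure_Ioc_lt_top))
            measurableSet_Ioc (fun t ht => hbound t (Set.Ioc_subset_Icc_self ht))
      _ = (b - a) * M := by
          rw [setIntegral_const, Real.volume_real_Ioc, max_eq_left (by linarith)]
          simp [smul_eq_mul]
  have hIabs : |∫ t in a..b, (t - x) ^ n * iteratedDeriv n f t|
      ≤ ∫ t, |t - x| ^ n * |iteratedDeriv n f t| ∂μ := by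
    calc |∫ t in a..b, (t - x) ^ n * iteratedDeriv n f t|
        ≤ ∫ t in a..b, |(t - x) ^ n * iteratedDeriv n f t| :=
          intervalIntegral.abs_integral_le_integral_abs hab'
      _ = ∫ t, |t - x| ^ n * |iteratedDeriv n f t| ∂μ := by
          rw [intervalIntegral.integral_of_le hab']
          simp_rw [abs_mul, abs_pow]
          rfl
  have hKnn : (0:ℝ) ≤ ((x - a) ^ ((n:ℝ) * p + 1) + (b - x) ^ ((n:ℝ) * p + 1)) / ((n:ℝ) * p + 1) :=
    div_nonneg (add_nonneg (Real.rpow_nonneg (by linarith) _) (Real.rpow_nonneg (by linarith) _))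
      (by positivity)
  have hGnn : (0:ℝ) ≤ ∫ t, |iteratedDeriv n f t| ^ q ∂μ :=
    integral_nonneg fun t => Real.rpow_nonneg (abs_nonneg _) _
  calc (1 / (n.factorial : ℝ)) * |∫ t in a..b, (t - x) ^ n * iteratedDeriv n f t|
      ≤ (1 / (n.factorial : ℝ)) *
        ((((x - a) ^ ((n:ℝ) * p + 1) + (b - x) ^ ((n:ℝ) * p + 1)) / ((n:ℝ) * p + 1)) ^ (1 / p) *
          (∫ t, |iteratedDeriv n f t| ^ q ∂μ) ^ (1 / q)) :=
        mul_le_mul_of_nonneg_left (hIabs.trans holder) (by positivity)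
    _ ≤ (1 / (n.factorial : ℝ)) *
        ((((x - a) ^ ((n:ℝ) * p + 1) + (b - x) ^ ((n:ℝ) * p + 1)) / ((n:ℝ) * p + 1)) ^ (1 / p) *
          ((b - a) * M) ^ (1 / q)) := by
        apply mul_le_mul_of_nonneg_left _ (by positivity)
        exact mul_le_mul_of_nonneg_left
          (Real.rpow_le_rpow hGnn hGle (by positivity)) (Real.rpow_nonneg hKnn _)
    _ = ((b - a) ^ (1 / q) / (Nat.factorial n : ℝ)) *
        (((x - a) ^ ((n : ℝ) * p + 1) + (b - x) ^ ((n : ℝ) * p + 1)) / ((n : ℝ) * p + 1)) ^ (1 / p) *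
          M ^ (1 / q) := by
        rw [Real.mul_rpow (by linarith) hM0]
        ring
end

section
/- Let f : [a,b] → ℝ be such that f^{(n-1)} (n ≥ 1) is absolutely continuous on [a,b] and |f^{(n)}|^q is quasi-convex on [a,b], where p > 1, 1/p + 1/q = 1, and nq > p. Then for all x ∈ [a,b]: |∫_a^b f(t) dt - Σ_{k=0}^{n-1} (1/(k+1)!)[(x-a)^{k+1} f^{(k)}(a) + (-1)^k (b-x)^{k+1} f^{(k)}(b)]| ≤ (1/n!)·((q-1)/(nq-p+q-1))^{1/p}·{((x-a)^{(nq+q-p-1)/(q-1)})^{1/p}·((x-a)^{p+1}/(p+1))^{1/q}·(max{|f^{(n)}(a)|^q, |f^{(n)}(x)|^q})^{1/q} + ((b-x)^{(nq+q-p-1)/(q-1)})^{1/p}·((b-x)^{p+1}/(p+1))^{1/q}·(max{|f^{(n)}(x)|^q, |f^{(n)}(b)|^q})^{1/q}}. -/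
open MeasureTheory Set


lemma taylor_id (f : ℝ → ℝ) (a b x : ℝ) (n : ℕ) (hn : 1 ≤ n)
    (hf : ContDiff ℝ ((n - 1 : ℕ) : ℕ∞) f)
    (hf' : ∀ t ∈ Set.Icc a b,
      HasDerivAt (iteratedDeriv (n - 1) f) (iteratedDeriv n f t) t)
    (hint : IntervalIntegrable (iteratedDeriv n f) volume a b)
    (hab : a ≤ b) :
    ∀ m, m ≤ n → (∫ t in a..b, f t) =
      (∑ k ∈ Finset.range m, (1 / (Nat.factorial (k + 1) : ℝ)) *
        ((x - a) ^ (k + 1) * iteratedDeriv k f a +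
          (-1 : ℝ) ^ k * (b - x) ^ (k + 1) * iteratedDeriv k f b)) +
      (1 / (Nat.factorial m : ℝ)) * ∫ t in a..b, (x - t) ^ m * iteratedDeriv m f t := by
  -- integrability of iterated derivatives
  have hintk : ∀ m, m ≤ n → IntervalIntegrable (iteratedDeriv m f) volume a b := by
    intro m hm
    rcases eq_or_lt_of_le hm with h | h
    · subst h; exact hint
    · have : m ≤ n - 1 := Nat.le_sub_one_of_lt h
      exact ((hf.continuous_iteratedDeriv m (by exact_mod_cast Nat.cast_le.2 this)).intervalIntegrable a b)
  have hderiv : ∀ m, m < n → ∀ t ∈ Set.Icc a b,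
      HasDerivAt (iteratedDeriv m f) (iteratedDeriv (m + 1) f t) t := by
    intro m hm t ht
    rcases eq_or_lt_of_le (Nat.le_sub_one_of_lt hm) with h | h
    · have h2 : m + 1 = n := by omega
      rw [h2, h]
      exact hf' t ht
    · have hd : Differentiable ℝ (iteratedDeriv m f) :=
        hf.differentiable_iteratedDeriv m (by exact_mod_cast Nat.cast_lt.2 h)
      have := (hd t).hasDerivAt
      rwa [← iteratedDeriv_succ] at this
  intro m hm
  induction m with
  | zero => simp [iteratedDeriv_zero]
  | succ m ih =>
    have hmn : m ≤ n := le_of_lt hm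
    rw [ih hmn]
    have hu : ∀ t ∈ Set.uIcc a b, HasDerivAt (iteratedDeriv m f) (iteratedDeriv (m+1) f t) t := by
      rw [Set.uIcc_of_le hab]; exact hderiv m hm
    have hv : ∀ t ∈ Set.uIcc a b,
        HasDerivAt (fun t => -(x - t) ^ (m + 1) / (m + 1)) ((x - t) ^ m) t := by
      intro t _
      have h1 : HasDerivAt (fun t : ℝ => (x - t)) (-1) t := by
        simpa using ((hasDerivAt_id t).const_sub x)
      have h2 : HasDerivAt (fun t : ℝ => (x - t) ^ (m + 1))
          ((m + 1 : ℕ) * (x - t) ^ m * (-1)) t := (h1.pow (m+1))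
      have h3 := (h2.div_const (m + 1)).neg
      convert h3 using 1
      · rfl
      · rfl
      · ext s; simp only [Pi.neg_apply]; ring
      · push_cast
        have : (m:ℝ) + 1 ≠ 0 := by positivity
        field_simp
    have hparts := intervalIntegral.integral_mul_deriv_eq_deriv_mul hu hv
      (hintk (m+1) hm)
      (((continuous_const.sub continuous_id).pow m).intervalIntegrable a b)
    have hcomm : (∫ t in a..b, (x - t) ^ m * iteratedDeriv m f t)
        = ∫ t in a..b, iteratedDeriv m f t * (x - t) ^ m := by
      congr 1; ext t; ring
    rw [hcomm, hparts, Finset.sum_range_succ]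
    have hintg : ∫ t in a..b, iteratedDeriv (m+1) f t * (-(x - t) ^ (m + 1) / (m + 1))
        = (-(1 : ℝ)/(m+1)) * ∫ t in a..b, (x - t) ^ (m+1) * iteratedDeriv (m+1) f t := by
      rw [← intervalIntegral.integral_const_mul]
      congr 1; ext t; ring
    rw [hintg]
    have hfac : (Nat.factorial (m+1) : ℝ) = (Nat.factorial m : ℝ) * (m + 1) := by
      rw [Nat.factorial_succ]; push_cast; ring
    have hm1 : ((m:ℝ) + 1) ≠ 0 := by positivity
    have hfm : (Nat.factorial m : ℝ) ≠ 0 := Nat.cast_ne_zero.2 (Nat.factorial_ne_zero m)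
    have hsign : -(x - b) ^ (m + 1) = (-1:ℝ)^m * (b - x)^(m+1) := by
      have : (x - b) = -(b - x) := by ring
      rw [this, neg_pow]; ring
    rw [← hsign, hfac]
    field_simp
    ring


lemma term_bound (n : ℕ) (p q A S : ℝ) (hp : 1 < p) (hpq : 1 / p + 1 / q = 1)
    (hnq : p < (n : ℝ) * q) (hA : 0 ≤ A) (hS : 0 ≤ S) :
    S * A ^ (n + 1) / (n + 1) ≤
      ((q - 1) / ((n : ℝ) * q - p + q - 1)) ^ (1 / p) *
        ((A ^ (((n : ℝ) * q + q - p - 1) / (q - 1))) ^ (1 / p) *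
          (A ^ (p + 1) / (p + 1)) ^ (1 / q) * S) := by
  have hp0 : 0 < p := lt_trans one_pos hp
  have hq0 : 0 < q := by
    by_contra h
    push_neg at h
    have h1 : 1 / q ≤ 0 := one_div_nonpos.mpr h
    have h2 : 1 / p < 1 := by rw [div_lt_one hp0]; exact hp
    linarith
  have hq1 : 1 < q := by
    by_contra h
    push_neg at h
    have h1 : 1 ≤ 1 / q := one_le_one_div hq0 h
    have h2 : 0 < 1 / p := by positivity
    linarith
  have hpqr : p * q = p + q := by
    field_simp at hpq
    linarith
  have hq1' : q - 1 ≠ 0 := by linarith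
  have hnp : p - 1 < (n : ℝ) := by
    have hql : q * (p - 1) = p := by nlinarith
    nlinarith
  set E : ℝ := (n : ℝ) * p - p ^ 2 + p + 1 with hEdef
  have hE : 0 < E := by nlinarith
  have he : ((n : ℝ) * q + q - p - 1) / (q - 1) = E := by
    rw [hEdef]
    field_simp
    ring_nf
    nlinarith [hpqr, mul_self_nonneg (p - q)]
  have hd : (n : ℝ) * q - p + q - 1 = E * (q - 1) := by
    have := (div_eq_iff hq1').mp he
    linarith
  have hC : (q - 1) / ((n : ℝ) * q - p + q - 1) = 1 / E := by
    rw [hd]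
    rw [mul_comm, div_mul_eq_div_div, div_self hq1']
  have hsum : E / p + (p + 1) / q = (n : ℝ) + 1 := by
    rw [hEdef]
    field_simp
    nlinarith [hpqr]
  rw [he, hC]
  rcases hA.eq_or_lt with h | h
  · rw [← h]
    rw [zero_pow (Nat.succ_ne_zero n)]
    rw [mul_zero, zero_div]
    have h1 : (0:ℝ) ≤ (1 / E) ^ (1 / p) := Real.rpow_nonneg (by positivity) _
    have h2 : (0:ℝ) ≤ ((0:ℝ) ^ E) ^ (1 / p) := Real.rpow_nonneg (Real.rpow_nonneg le_rfl _) _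
    have h3 : (0:ℝ) ≤ ((0:ℝ) ^ (p + 1) / (p + 1)) ^ (1 / q) := Real.rpow_nonneg
      (div_nonneg (Real.rpow_nonneg le_rfl _) (by positivity)) _
    exact mul_nonneg h1 (mul_nonneg (mul_nonneg h2 h3) hS)
  · have r1 : (A ^ E) ^ (1 / p) = A ^ (E * (1 / p)) := (Real.rpow_mul hA E (1 / p)).symm
    have r2 : (A ^ (p + 1) / (p + 1)) ^ (1 / q)
        = A ^ ((p + 1) * (1 / q)) / (p + 1) ^ (1 / q) := by
      rw [Real.div_rpow (Real.rpow_nonneg hA _) (by positivity), ← Real.rpow_mul hA]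
    have r3 : ((1 : ℝ) / E) ^ (1 / p) = 1 / E ^ (1 / p) := by
      rw [Real.div_rpow (by norm_num) hE.le, Real.one_rpow]
    have key : A ^ (n + 1) = A ^ (E * (1 / p)) * A ^ ((p + 1) * (1 / q)) := by
      rw [← Real.rpow_add h]
      rw [← Real.rpow_natCast A (n + 1)]
      congr 1
      push_cast
      rw [mul_one_div, mul_one_div, hsum]
    have young : E ^ (1 / p) * (p + 1) ^ (1 / q) ≤ (n : ℝ) + 1 := by
      have := Real.geom_mean_le_arith_mean2_weighted
        (by positivity : (0:ℝ) ≤ 1 / p) (by positivity : (0:ℝ) ≤ 1 / q)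
        hE.le (by positivity : (0:ℝ) ≤ p + 1) hpq
      calc E ^ (1 / p) * (p + 1) ^ (1 / q) ≤ 1 / p * E + 1 / q * (p + 1) := this
        _ = E / p + (p + 1) / q := by ring
        _ = (n : ℝ) + 1 := hsum
    have pos : 0 < E ^ (1 / p) * (p + 1) ^ (1 / q) :=
      mul_pos (Real.rpow_pos_of_pos hE _) (Real.rpow_pos_of_pos (by linarith) _)
    have hinv : 1 / ((n : ℝ) + 1) ≤ 1 / (E ^ (1 / p) * (p + 1) ^ (1 / q)) :=
      one_div_le_one_div_of_le pos young
    have hX : (0:ℝ) ≤ S * (A ^ (E * (1 / p)) * A ^ ((p + 1) * (1 / q))) :=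
      mul_nonneg hS (mul_nonneg (Real.rpow_nonneg hA _) (Real.rpow_nonneg hA _))
    calc S * A ^ (n + 1) / ((n : ℝ) + 1)
        = S * (A ^ (E * (1 / p)) * A ^ ((p + 1) * (1 / q))) * (1 / ((n : ℝ) + 1)) := by
          rw [key]; ring
      _ ≤ S * (A ^ (E * (1 / p)) * A ^ ((p + 1) * (1 / q)))
            * (1 / (E ^ (1 / p) * (p + 1) ^ (1 / q))) := by
          exact mul_le_mul_of_nonneg_left hinv hX
      _ = (1 / E) ^ (1 / p) * ((A ^ E) ^ (1 / p) * (A ^ (p + 1) / (p + 1)) ^ (1 / q) * S) := by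
          rw [r1, r2, r3]
          field_simp


lemma le_of_rpow_le_rpow' (u v q : ℝ) (hu : 0 ≤ u) (hv : 0 ≤ v) (hq : 0 < q)
    (h : u ^ q ≤ v ^ q) : u ≤ v := by
  have h2 := Real.rpow_le_rpow (Real.rpow_nonneg hu q) h (le_of_lt (by positivity : (0:ℝ) < q⁻¹))
  rwa [Real.rpow_rpow_inv hu hq.ne', Real.rpow_rpow_inv hv hq.ne'] at h2

lemma max_rpow' (u v q : ℝ) (hu : 0 ≤ u) (hv : 0 ≤ v) (hq : 0 ≤ q) :
    max (u ^ q) (v ^ q) = (max u v) ^ q := by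
  rcases le_total u v with h | h
  · rw [max_eq_right h, max_eq_right (Real.rpow_le_rpow hu h hq)]
  · rw [max_eq_left h, max_eq_left (Real.rpow_le_rpow hv h hq)]

theorem stmt_5 (f : ℝ → ℝ) (a b : ℝ) (hab : a < b) (n : ℕ) (hn : 1 ≤ n)
    (p q : ℝ) (hp : 1 < p) (hpq : 1 / p + 1 / q = 1) (hnq : p < (n : ℝ) * q)
    (hf : ContDiff ℝ ((n - 1 : ℕ) : ℕ∞) f)
    (hf' : ∀ t ∈ Set.Icc a b,
      HasDerivAt (iteratedDeriv (n - 1) f) (iteratedDeriv n f t) t)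
    (hint : IntervalIntegrable (iteratedDeriv n f) volume a b)
    (hq : ∀ u ∈ Set.Icc a b, ∀ v ∈ Set.Icc a b, ∀ α ∈ Set.Icc (0 : ℝ) 1,
      |iteratedDeriv n f (α * u + (1 - α) * v)| ^ q ≤
        max (|iteratedDeriv n f u| ^ q) (|iteratedDeriv n f v| ^ q))
    (x : ℝ) (hx : x ∈ Set.Icc a b) :
    |(∫ t in a..b, f t) -
      ∑ k ∈ Finset.range n, (1 / (Nat.factorial (k + 1) : ℝ)) *
        ((x - a) ^ (k + 1) * iteratedDeriv k f a +
          (-1 : ℝ) ^ k * (b - x) ^ (k + 1) * iteratedDeriv k f b)| ≤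
    (1 / (Nat.factorial n : ℝ)) * ((q - 1) / ((n : ℝ) * q - p + q - 1)) ^ (1 / p) *
      (((x - a) ^ (((n : ℝ) * q + q - p - 1) / (q - 1))) ^ (1 / p) *
          ((x - a) ^ (p + 1) / (p + 1)) ^ (1 / q) *
          (max (|iteratedDeriv n f a| ^ q) (|iteratedDeriv n f x| ^ q)) ^ (1 / q) +
        ((b - x) ^ (((n : ℝ) * q + q - p - 1) / (q - 1))) ^ (1 / p) *
          ((b - x) ^ (p + 1) / (p + 1)) ^ (1 / q) *
          (max (|iteratedDeriv n f x| ^ q) (|iteratedDeriv n f b| ^ q)) ^ (1 / q)) := by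
  have hax : a ≤ x := hx.1
  have hxb : x ≤ b := hx.2
  have hp0 : 0 < p := lt_trans one_pos hp
  have hq0 : 0 < q := by
    by_contra h
    push_neg at h
    have h1 : 1 / q ≤ 0 := one_div_nonpos.mpr h
    have h2 : 1 / p < 1 := by rw [div_lt_one hp0]; exact hp
    linarith
  set g := iteratedDeriv n f with hg
  set S1 := max |g a| |g x| with hS1
  set S2 := max |g x| |g b| with hS2
  have hS1n : 0 ≤ S1 := (abs_nonneg _).trans (le_max_left _ _)
  have hS2n : 0 ≤ S2 := (abs_nonneg _).trans (le_max_left _ _)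
  -- sup bounds from quasi-convexity
  have hb1 : ∀ t ∈ Set.Icc a x, |g t| ≤ S1 := by
    intro t ht
    rcases eq_or_lt_of_le hax with hax' | hax'
    · have hta : t = a := le_antisymm (hax' ▸ ht.2) ht.1
      rw [hta]; exact le_max_left _ _
    · have hqt := hq a ⟨le_rfl, hab.le⟩ x hx ((x - t)/(x - a))
        ⟨div_nonneg (by linarith [ht.2]) (by linarith),
         (div_le_one (by linarith)).mpr (by linarith [ht.1])⟩
      have hcomb : (x - t)/(x - a) * a + (1 - (x - t)/(x - a)) * x = t := by
        have hne : x - a ≠ 0 := by linarith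
        field_simp
        ring
      rw [hcomb] at hqt
      rw [max_rpow' _ _ q (abs_nonneg _) (abs_nonneg _) hq0.le] at hqt
      exact le_of_rpow_le_rpow' _ _ q (abs_nonneg _) hS1n hq0 hqt
  have hb2 : ∀ t ∈ Set.Icc x b, |g t| ≤ S2 := by
    intro t ht
    rcases eq_or_lt_of_le hxb with hxb' | hxb'
    · have htx : t = x := le_antisymm (hxb' ▸ ht.2) ht.1
      rw [htx]; exact le_max_left _ _
    · have hqt := hq x hx b ⟨hab.le, le_rfl⟩ ((b - t)/(b - x))
        ⟨div_nonneg (by linarith [ht.2]) (by linarith),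
         (div_le_one (by linarith)).mpr (by linarith [ht.1])⟩
      have hcomb : (b - t)/(b - x) * x + (1 - (b - t)/(b - x)) * b = t := by
        have hne : b - x ≠ 0 := by linarith
        field_simp
        ring
      rw [hcomb] at hqt
      rw [max_rpow' _ _ q (abs_nonneg _) (abs_nonneg _) hq0.le] at hqt
      exact le_of_rpow_le_rpow' _ _ q (abs_nonneg _) hS2n hq0 hqt
  -- integrability
  have hI : IntervalIntegrable (fun t => (x - t) ^ n * g t) volume a b :=
    hint.continuousOn_mul (((continuous_const.sub continuous_id).pow n).continuousOn)
  have hI1 : IntervalIntegrable (fun t => (x - t) ^ n * g t) volume a x :=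
    hI.mono_set (by
      rw [Set.uIcc_of_le hax, Set.uIcc_of_le hab.le]
      exact Set.Icc_subset_Icc le_rfl hxb)
  have hI2 : IntervalIntegrable (fun t => (x - t) ^ n * g t) volume x b :=
    hI.mono_set (by
      rw [Set.uIcc_of_le hxb, Set.uIcc_of_le hab.le]
      exact Set.Icc_subset_Icc hax le_rfl)
  -- the Taylor identity
  have hid := taylor_id f a b x n hn hf hf' hint hab.le n le_rfl
  rw [← hg] at hid
  rw [hid, add_sub_cancel_left, abs_mul,
    abs_of_nonneg (by positivity : (0:ℝ) ≤ 1 / (Nat.factorial n : ℝ))]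
  -- split the integral
  have hsplit : (∫ t in a..b, (x - t) ^ n * g t)
      = (∫ t in a..x, (x - t) ^ n * g t) + ∫ t in x..b, (x - t) ^ n * g t :=
    (intervalIntegral.integral_add_adjacent_intervals hI1 hI2).symm
  -- elementary integrals
  have hc1 : (∫ t in a..x, (x - t) ^ n) = (x - a) ^ (n + 1) / ((n:ℝ) + 1) := by
    have h := intervalIntegral.integral_comp_sub_left (a := a) (b := x) (fun u => u ^ n) x
    rw [h, integral_pow, sub_self, zero_pow (Nat.succ_ne_zero n), sub_zero]
  have hc2 : (∫ t in x..b, (t - x) ^ n) = (b - x) ^ (n + 1) / ((n:ℝ) + 1) := by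
    have h := intervalIntegral.integral_comp_sub_right (a := x) (b := b) (fun u => u ^ n) x
    rw [h, integral_pow, sub_self, zero_pow (Nat.succ_ne_zero n), sub_zero]
  -- bounds on the two pieces
  have hB1 : |∫ t in a..x, (x - t) ^ n * g t| ≤ S1 * (x - a) ^ (n + 1) / ((n:ℝ) + 1) := by
    have h1 := intervalIntegral.abs_integral_le_integral_abs
      (f := fun t => (x - t) ^ n * g t) (μ := volume) hax
    have h2 : (∫ t in a..x, |(x - t) ^ n * g t|) ≤ ∫ t in a..x, (x - t) ^ n * S1 := by
      apply intervalIntegral.integral_mono_on hax hI1.abs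
        ((((continuous_const.sub continuous_id).pow n).mul continuous_const).intervalIntegrable a x)
      intro t ht
      rw [abs_mul, abs_pow, abs_of_nonneg (by linarith [ht.2] : (0:ℝ) ≤ x - t)]
      exact mul_le_mul_of_nonneg_left (hb1 t ht) (pow_nonneg (by linarith [ht.2]) n)
    have h3 : (∫ t in a..x, (x - t) ^ n * S1) = S1 * (x - a) ^ (n + 1) / ((n:ℝ) + 1) := by
      rw [intervalIntegral.integral_mul_const, hc1]
      ring
    linarith
  have hB2 : |∫ t in x..b, (x - t) ^ n * g t| ≤ S2 * (b - x) ^ (n + 1) / ((n:ℝ) + 1) := by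
    have h1 := intervalIntegral.abs_integral_le_integral_abs
      (f := fun t => (x - t) ^ n * g t) (μ := volume) hxb
    have h2 : (∫ t in x..b, |(x - t) ^ n * g t|) ≤ ∫ t in x..b, (t - x) ^ n * S2 := by
      apply intervalIntegral.integral_mono_on hxb hI2.abs
        ((((continuous_id.sub continuous_const).pow n).mul continuous_const).intervalIntegrable x b)
      intro t ht
      rw [abs_mul, abs_pow, abs_sub_comm, abs_of_nonneg (by linarith [ht.1] : (0:ℝ) ≤ t - x)]
      exact mul_le_mul_of_nonneg_left (hb2 t ht) (pow_nonneg (by linarith [ht.1]) n)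
    have h3 : (∫ t in x..b, (t - x) ^ n * S2) = S2 * (b - x) ^ (n + 1) / ((n:ℝ) + 1) := by
      rw [intervalIntegral.integral_mul_const, hc2]
      ring
    linarith
  -- rewrite the max-powers
  have hM1 : (max (|g a| ^ q) (|g x| ^ q)) ^ (1 / q) = S1 := by
    rw [max_rpow' _ _ q (abs_nonneg _) (abs_nonneg _) hq0.le, hS1, one_div,
      Real.rpow_rpow_inv hS1n hq0.ne']
  have hM2 : (max (|g x| ^ q) (|g b| ^ q)) ^ (1 / q) = S2 := by
    rw [max_rpow' _ _ q (abs_nonneg _) (abs_nonneg _) hq0.le, hS2, one_div,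
      Real.rpow_rpow_inv hS2n hq0.ne']
  rw [hM1, hM2]
  -- term bounds
  have htb1 := term_bound n p q (x - a) S1 hp hpq hnq (by linarith) hS1n
  have htb2 := term_bound n p q (b - x) S2 hp hpq hnq (by linarith) hS2n
  have hfn : (0:ℝ) ≤ 1 / (Nat.factorial n : ℝ) := by positivity
  calc (1 / (Nat.factorial n : ℝ)) * |∫ t in a..b, (x - t) ^ n * g t|
      ≤ (1 / (Nat.factorial n : ℝ)) *
        (S1 * (x - a) ^ (n + 1) / ((n:ℝ) + 1) + S2 * (b - x) ^ (n + 1) / ((n:ℝ) + 1)) := by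
        apply mul_le_mul_of_nonneg_left _ hfn
        rw [hsplit]
        calc |(∫ t in a..x, (x - t) ^ n * g t) + ∫ t in x..b, (x - t) ^ n * g t|
            ≤ |∫ t in a..x, (x - t) ^ n * g t| + |∫ t in x..b, (x - t) ^ n * g t| :=
              abs_add_le _ _
          _ ≤ _ := add_le_add hB1 hB2
    _ ≤ (1 / (Nat.factorial n : ℝ)) *
        (((q - 1) / ((n : ℝ) * q - p + q - 1)) ^ (1 / p) *
            (((x - a) ^ (((n : ℝ) * q + q - p - 1) / (q - 1))) ^ (1 / p) *
              ((x - a) ^ (p + 1) / (p + 1)) ^ (1 / q) * S1) +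
          ((q - 1) / ((n : ℝ) * q - p + q - 1)) ^ (1 / p) *
            (((b - x) ^ (((n : ℝ) * q + q - p - 1) / (q - 1))) ^ (1 / p) *
              ((b - x) ^ (p + 1) / (p + 1)) ^ (1 / q) * S2)) := by
        exact mul_le_mul_of_nonneg_left (add_le_add htb1 htb2) hfn
    _ = _ := by ring
end

section
/- Let f : [a,b] → ℝ be n-times differentiable (n ≥ 2) and suppose |f^{(n)}|^q is quasi-convex on [a,b] for some q ≥ 1. Then |(f(a)+f(b))/2 - (1/(b-a))∫_a^b f(x) dx - Σ_{k=2}^{n-1} ((k-1)(b-a)^k/(2(k+1)!)) f^{(k)}(a)| ≤ ((b-a)^n (n-1)/(2(n+1)!))·(max{|f^{(n)}(a)|^q, |f^{(n)}(b)|^q})^{1/q}. -/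
open MeasureTheory Set intervalIntegral

noncomputable def Kk (a b : ℝ) (j : ℕ) (t : ℝ) : ℝ :=
  (b - t) ^ (j + 1) * (((j : ℝ) + 2) * (t - a) + (j : ℝ) * (b - t)) /
    (2 * (b - a) * (Nat.factorial (j + 2) : ℝ))

theorem Kk_cont (a b : ℝ) (j : ℕ) : Continuous (Kk a b j) := by
  unfold Kk; fun_prop

theorem Kk_nonneg (a b : ℝ) (hab : a < b) (j : ℕ) {t : ℝ} (ht : t ∈ Icc a b) :
    0 ≤ Kk a b j t := by
  obtain ⟨h1, h2⟩ := ht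
  have hba : (0:ℝ) < b - a := by linarith
  have hfac : (0:ℝ) < (Nat.factorial (j + 2) : ℝ) := by positivity
  unfold Kk
  apply div_nonneg
  · apply mul_nonneg (pow_nonneg (by linarith) _)
    have : (0:ℝ) ≤ (j:ℝ) := Nat.cast_nonneg j
    apply add_nonneg <;> apply mul_nonneg <;> linarith
  · positivity

theorem Kk_b (a b : ℝ) (j : ℕ) : Kk a b j b = 0 := by
  unfold Kk; simp [pow_succ]

theorem Kk_a (a b : ℝ) (hab : a < b) (j : ℕ) :
    Kk a b j a = (j : ℝ) * (b - a) ^ (j + 1) / (2 * (Nat.factorial (j + 2) : ℝ)) := by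
  have h : (b - a) ≠ 0 := by linarith
  have hfac : (Nat.factorial (j + 2) : ℝ) ≠ 0 := by positivity
  unfold Kk
  field_simp
  ring

theorem Kk_deriv (a b : ℝ) (hab : a < b) (j : ℕ) (t : ℝ) :
    HasDerivAt (Kk a b (j + 1)) (-(Kk a b j t)) t := by
  have hba : (b - a) ≠ 0 := by linarith
  have hfac : (Nat.factorial (j + 2) : ℝ) ≠ 0 := by positivity
  have hfac3 : (Nat.factorial (j + 3) : ℝ) ≠ 0 := by positivity
  have hfs : (Nat.factorial (j + 3) : ℝ) = ((j : ℝ) + 3) * (Nat.factorial (j + 2) : ℝ) := by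
    rw [show j + 3 = (j + 2) + 1 from rfl, Nat.factorial_succ]; push_cast; ring
  have hlin : HasDerivAt (fun t : ℝ => b - t) (-1) t := by
    simpa using (hasDerivAt_id t).const_sub b
  have hpow : HasDerivAt (fun t : ℝ => (b - t) ^ (j + 2))
      (((j : ℝ) + 2) * (b - t) ^ (j + 1) * (-1)) t := by
    have : HasDerivAt (fun t : ℝ => (b - t) ^ (j + 2)) _ t := hlin.pow (j + 2)
    simpa [Nat.add_sub_cancel] using this
  have hmul : HasDerivAt
      (fun t : ℝ => (b - t) ^ (j + 2) * (((j : ℝ) + 3) * (t - a) + ((j : ℝ) + 1) * (b - t)))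
      ((((j : ℝ) + 2) * (b - t) ^ (j + 1) * (-1)) *
        (((j : ℝ) + 3) * (t - a) + ((j : ℝ) + 1) * (b - t)) +
       (b - t) ^ (j + 2) * (((j : ℝ) + 3) * 1 + ((j : ℝ) + 1) * (-1))) t := by
    apply hpow.mul
    exact (((hasDerivAt_id t).sub_const a).const_mul _).add (hlin.const_mul _)
  have hfeq : Kk a b (j + 1) =
      fun x : ℝ => (b - x) ^ (j + 2) * (((j : ℝ) + 3) * (x - a) + ((j : ℝ) + 1) * (b - x)) /
        (2 * (b - a) * (Nat.factorial (j + 3) : ℝ)) := by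
    funext x; unfold Kk; push_cast [show j + 1 + 2 = j + 3 from rfl]; ring_nf
  have h := hmul.div_const (2 * (b - a) * (Nat.factorial (j + 3) : ℝ))
  rw [← hfeq] at h
  refine h.congr_deriv ?_
  unfold Kk
  rw [hfs]
  field_simp
  ring

theorem int_pow_sub (a b : ℝ) (m : ℕ) :
    ∫ t in a..b, (b - t) ^ m = (b - a) ^ (m + 1) / (m + 1) := by
  have := intervalIntegral.integral_comp_sub_left (a := a) (b := b) (fun x : ℝ => x ^ m) b
  simp only [sub_self] at this
  rw [this, integral_pow]
  simp

theorem Kk_integral (a b : ℝ) (hab : a < b) (j : ℕ) :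
    ∫ t in a..b, Kk a b j t =
      (b - a) ^ (j + 2) * ((j : ℝ) + 1) / (2 * (Nat.factorial (j + 3) : ℝ)) := by
  have hba : (b - a) ≠ 0 := by linarith
  have hfac : (Nat.factorial (j + 2) : ℝ) ≠ 0 := by positivity
  have hfs : (Nat.factorial (j + 3) : ℝ) = ((j : ℝ) + 3) * (Nat.factorial (j + 2) : ℝ) := by
    rw [show j + 3 = (j + 2) + 1 from rfl, Nat.factorial_succ]; push_cast; ring
  set C := 2 * (b - a) * (Nat.factorial (j + 2) : ℝ) with hC
  have hCne : C ≠ 0 := by rw [hC]; positivity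
  have hre : ∀ t : ℝ, Kk a b j t =
      (((j : ℝ) + 2) * (b - a) / C) * (b - t) ^ (j + 1) + (-2 / C) * (b - t) ^ (j + 2) := by
    intro t
    unfold Kk
    rw [show (b - t) ^ (j + 2) = (b - t) ^ (j + 1) * (b - t) from by ring]
    field_simp
    ring
  rw [intervalIntegral.integral_congr (g := fun t =>
      (((j : ℝ) + 2) * (b - a) / C) * (b - t) ^ (j + 1) + (-2 / C) * (b - t) ^ (j + 2))
      (fun t _ => hre t)]
  rw [intervalIntegral.integral_add, intervalIntegral.integral_const_mul,
    intervalIntegral.integral_const_mul, int_pow_sub, int_pow_sub]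
  · push_cast [hfs]
    have h2 : ((j:ℝ) + 1 + 1) ≠ 0 := by positivity
    have h3 : ((j:ℝ) + 2 + 1) ≠ 0 := by positivity
    field_simp
    ring
  · apply Continuous.intervalIntegrable; fun_prop
  · apply Continuous.intervalIntegrable; fun_prop

theorem Kk0_deriv (a b : ℝ) (hab : a < b) (t : ℝ) :
    HasDerivAt (Kk a b 0) ((a + b - 2 * t) / (2 * (b - a))) t := by
  have hba : (b - a) ≠ 0 := by linarith
  have hfeq : Kk a b 0 = fun x : ℝ => (b - x) * (x - a) / (2 * (b - a)) := by
    funext x; unfold Kk; norm_num [Nat.factorial]; field_simp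
  rw [hfeq]
  have hlin : HasDerivAt (fun t : ℝ => b - t) (-1) t := by
    simpa using (hasDerivAt_id t).const_sub b
  have h : HasDerivAt (fun x : ℝ => (b - x) * (x - a) / (2 * (b - a))) _ t := (hlin.mul ((hasDerivAt_id' t).sub_const a)).div_const (2 * (b - a))
  refine h.congr_deriv ?_
  field_simp
  ring

theorem P1_deriv (a b : ℝ) (hab : a < b) (t : ℝ) :
    HasDerivAt (fun x : ℝ => (a + b - 2 * x) / (2 * (b - a))) (-(1 / (b - a))) t := by
  have hba : (b - a) ≠ 0 := by linarith
  have h : HasDerivAt (fun x : ℝ => a + b - 2 * x) (-2) t := by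
    simpa using ((hasDerivAt_id t).const_mul 2).const_sub (a + b)
  have h2 := h.div_const (2 * (b - a))
  refine h2.congr_deriv ?_
  field_simp

theorem stmt_6 (f : ℝ → ℝ) (a b : ℝ) (hab : a < b) (n : ℕ) (hn : 2 ≤ n)
    (q : ℝ) (hq1 : 1 ≤ q)
    (hf : ∀ k < n, ∀ t ∈ Set.Icc a b,
      HasDerivAt (iteratedDeriv k f) (iteratedDeriv (k + 1) f t) t)
    (hint : IntervalIntegrable (iteratedDeriv n f) volume a b)
    (hq : ∀ u ∈ Set.Icc a b, ∀ v ∈ Set.Icc a b, ∀ α ∈ Set.Icc (0 : ℝ) 1,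
      |iteratedDeriv n f (α * u + (1 - α) * v)| ^ q ≤
        max (|iteratedDeriv n f u| ^ q) (|iteratedDeriv n f v| ^ q)) :
    |(f a + f b) / 2 - (1 / (b - a)) * (∫ x in a..b, f x) -
      ∑ k ∈ Finset.Icc 2 (n - 1),
        (((k : ℝ) - 1) * (b - a) ^ k / (2 * (Nat.factorial (k + 1) : ℝ))) *
          iteratedDeriv k f a| ≤
    ((b - a) ^ n * ((n : ℝ) - 1) / (2 * (Nat.factorial (n + 1) : ℝ))) *
      (max (|iteratedDeriv n f a| ^ q) (|iteratedDeriv n f b| ^ q)) ^ (1 / q) := by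
  have hba : (b - a) ≠ 0 := by intro h; linarith [sub_pos.mpr hab]
  have huIcc : Set.uIcc a b = Set.Icc a b := Set.uIcc_of_le hab.le
  -- integrability of iterated derivatives
  have hInt : ∀ k, k ≤ n → IntervalIntegrable (iteratedDeriv k f) volume a b := by
    intro k hk
    rcases eq_or_lt_of_le hk with h | h
    · exact h ▸ hint
    · apply ContinuousOn.intervalIntegrable
      rw [huIcc]
      exact fun t ht => ((hf k h t ht).continuousAt).continuousWithinAt
  -- main identity
  have main : ∀ j : ℕ, j + 2 ≤ n →
      (f a + f b) / 2 - (1 / (b - a)) * (∫ x in a..b, f x) -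
        ∑ k ∈ Finset.Icc 2 (j + 1),
          (((k : ℝ) - 1) * (b - a) ^ k / (2 * (Nat.factorial (k + 1) : ℝ))) *
            iteratedDeriv k f a
      = ∫ x in a..b, Kk a b j x * iteratedDeriv (j + 2) f x := by
    intro j
    induction j with
    | zero =>
      intro hj2
      rw [show Finset.Icc 2 1 = ∅ from rfl]
      simp only [Finset.sum_empty, sub_zero]
      have ibp1 : ∫ x in a..b, Kk a b 0 x * iteratedDeriv 2 f x =
          Kk a b 0 b * iteratedDeriv 1 f b - Kk a b 0 a * iteratedDeriv 1 f a -
            ∫ x in a..b, ((a + b - 2 * x) / (2 * (b - a))) * iteratedDeriv 1 f x := by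
        apply intervalIntegral.integral_mul_deriv_eq_deriv_mul
        · exact fun x _ => Kk0_deriv a b hab x
        · intro x hx
          rw [huIcc] at hx
          exact hf 1 (by omega) x hx
        · apply Continuous.intervalIntegrable; fun_prop
        · exact hInt 2 hj2
      have ibp2 : ∫ x in a..b, ((a + b - 2 * x) / (2 * (b - a))) * iteratedDeriv 1 f x =
          ((a + b - 2 * b) / (2 * (b - a))) * iteratedDeriv 0 f b -
            ((a + b - 2 * a) / (2 * (b - a))) * iteratedDeriv 0 f a -
            ∫ x in a..b, (-(1 / (b - a))) * iteratedDeriv 0 f x := by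
        apply intervalIntegral.integral_mul_deriv_eq_deriv_mul
        · exact fun x _ => P1_deriv a b hab x
        · intro x hx
          rw [huIcc] at hx
          exact hf 0 (by omega) x hx
        · apply Continuous.intervalIntegrable; fun_prop
        · exact hInt 1 (by omega)
      rw [ibp1, ibp2, Kk_b, Kk_a a b hab, intervalIntegral.integral_const_mul,
        iteratedDeriv_zero]
      have e1 : (a + b - 2 * b) / (2 * (b - a)) = -(1/2) := by field_simp; ring
      have e2 : (a + b - 2 * a) / (2 * (b - a)) = 1/2 := by field_simp; ring
      rw [e1, e2]
      push_cast
      ring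
    | succ j ih =>
      intro hj3
      have hIH := ih (by omega)
      have hsum : ∑ k ∈ Finset.Icc 2 (j + 1 + 1),
          (((k : ℝ) - 1) * (b - a) ^ k / (2 * (Nat.factorial (k + 1) : ℝ))) *
            iteratedDeriv k f a
          = (∑ k ∈ Finset.Icc 2 (j + 1),
              (((k : ℝ) - 1) * (b - a) ^ k / (2 * (Nat.factorial (k + 1) : ℝ))) *
                iteratedDeriv k f a)
            + (((j + 2 : ℕ) : ℝ) - 1) * (b - a) ^ (j + 2) /
                (2 * (Nat.factorial (j + 3) : ℝ)) * iteratedDeriv (j + 2) f a := by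
        rw [Finset.sum_Icc_succ_top (by omega : 2 ≤ j + 1 + 1)]
      have ibp : ∫ x in a..b, Kk a b (j + 1) x * iteratedDeriv (j + 3) f x =
          Kk a b (j + 1) b * iteratedDeriv (j + 2) f b -
            Kk a b (j + 1) a * iteratedDeriv (j + 2) f a -
            ∫ x in a..b, (-(Kk a b j x)) * iteratedDeriv (j + 2) f x := by
        apply intervalIntegral.integral_mul_deriv_eq_deriv_mul
        · exact fun x _ => Kk_deriv a b hab j x
        · intro x hx
          rw [huIcc] at hx
          exact hf (j + 2) (by omega) x hx
        · apply Continuous.intervalIntegrable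
          exact (Kk_cont a b j).neg
        · exact hInt (j + 3) hj3
      have hneg : ∫ x in a..b, (-(Kk a b j x)) * iteratedDeriv (j + 2) f x =
          -∫ x in a..b, Kk a b j x * iteratedDeriv (j + 2) f x := by
        rw [← intervalIntegral.integral_neg]
        congr 1; funext x; ring
      rw [hsum, ibp, hneg, Kk_b, Kk_a a b hab]
      rw [← hIH]
      push_cast
      ring
  -- specialize to n
  obtain ⟨m, rfl⟩ : ∃ m, n = m + 2 := ⟨n - 2, by omega⟩
  have hmain := main m le_rfl
  rw [show m + 2 - 1 = m + 1 from rfl, hmain]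
  set g := iteratedDeriv (m + 2) f with hg
  set C := max (|g a| ^ q) (|g b| ^ q) with hCdef
  have hq0 : q ≠ 0 := by positivity
  have hC0 : 0 ≤ C := le_trans (Real.rpow_nonneg (abs_nonneg _) q) (le_max_left _ _)
  set M := C ^ (1 / q) with hMdef
  have hM0 : 0 ≤ M := Real.rpow_nonneg hC0 _
  have hbound : ∀ t ∈ Set.Icc a b, |g t| ≤ M := by
    intro t ht
    obtain ⟨h1, h2⟩ := ht
    set α := (b - t) / (b - a) with hα
    have hα0 : 0 ≤ α := div_nonneg (by linarith) (by linarith)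
    have hα1 : α ≤ 1 := by
      rw [hα, div_le_one (by linarith)]; linarith
    have hpt : α * a + (1 - α) * b = t := by
      rw [hα]; field_simp; ring
    have h := hq a ⟨le_refl a, hab.le⟩ b ⟨hab.le, le_refl b⟩ α ⟨hα0, hα1⟩
    rw [hpt] at h
    have key : |g t| = (|g t| ^ q) ^ (1 / q) := by
      rw [← Real.rpow_mul (abs_nonneg _), mul_one_div_cancel hq0, Real.rpow_one]
    rw [key]
    exact Real.rpow_le_rpow (Real.rpow_nonneg (abs_nonneg _) q) h (by positivity)
  have hgint : IntervalIntegrable g volume a b := hInt (m + 2) le_rfl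
  have hint2 : IntervalIntegrable (fun x => Kk a b m x * g x) volume a b :=
    hgint.continuousOn_mul ((Kk_cont a b m).continuousOn)
  have h1 : |∫ x in a..b, Kk a b m x * g x| ≤ ∫ x in a..b, |Kk a b m x * g x| :=
    intervalIntegral.abs_integral_le_integral_abs hab.le
  have h2 : (∫ x in a..b, |Kk a b m x * g x|) ≤ ∫ x in a..b, Kk a b m x * M := by
    apply intervalIntegral.integral_mono_on hab.le hint2.abs
    · exact ((Kk_cont a b m).mul continuous_const).intervalIntegrable a b
    · intro x hx
      rw [abs_mul, abs_of_nonneg (Kk_nonneg a b hab m hx)]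
      exact mul_le_mul_of_nonneg_left (hbound x hx) (Kk_nonneg a b hab m hx)
  have h3 : (∫ x in a..b, Kk a b m x * M) =
      ((b - a) ^ (m + 2) * ((m : ℝ) + 1) / (2 * (Nat.factorial (m + 3) : ℝ))) * M := by
    rw [intervalIntegral.integral_mul_const, Kk_integral a b hab]
  have h4 : ((b - a) ^ (m + 2) * (((m + 2 : ℕ) : ℝ) - 1) /
      (2 * (Nat.factorial (m + 2 + 1) : ℝ))) * M =
      ((b - a) ^ (m + 2) * ((m : ℝ) + 1) / (2 * (Nat.factorial (m + 3) : ℝ))) * M := by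
    push_cast
    ring_nf
  rw [h4]
  linarith [h1, h2, h3.le, h3.ge]
end

section
/- Let f : [a,b] → ℝ be n-times differentiable (n ≥ 2) with |f^{(n)}| quasi-convex on [a,b]. Then |(f(a)+f(b))/2 - (1/(b-a))∫_a^b f(x) dx - Σ_{k=2}^{n-1} ((k-1)(b-a)^k/(2(k+1)!)) f^{(k)}(a)| ≤ ((b-a)^n (n-1)/(2(n+1)!))·max{|f^{(n)}(a)|, |f^{(n)}(b)|}. -/
open MeasureTheory Set intervalIntegral


noncomputable def Gker (a b : ℝ) (m : ℕ) (x : ℝ) : ℝ :=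
  (b - x) ^ (m + 1) * ((m : ℝ) * (b - x) + ((m : ℝ) + 2) * (x - a))

lemma Gker_cont (a b : ℝ) (m : ℕ) : Continuous (Gker a b m) := by
  unfold Gker; fun_prop

lemma hasDerivAt_Gker (a b : ℝ) (m : ℕ) (x : ℝ) :
    HasDerivAt (Gker a b (m + 1)) (-(((m : ℝ) + 3) * Gker a b m x)) x := by
  have h1 : HasDerivAt (fun y : ℝ => b - y) (-1) x := (hasDerivAt_id x).const_sub b
  have hp : HasDerivAt (fun y : ℝ => (b - y) ^ (m + 2))
      (((m : ℝ) + 2) * (b - x) ^ (m + 1) * (-1)) x := by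
    have := h1.fun_pow (m + 2)
    simpa using this
  have hl : HasDerivAt (fun y : ℝ => ((m : ℝ) + 1) * (b - y) + ((m : ℝ) + 3) * (y - a))
      (((m : ℝ) + 1) * (-1) + ((m : ℝ) + 3) * 1) x :=
    (h1.const_mul _).add (((hasDerivAt_id x).sub_const a).const_mul _)
  have H := hp.mul hl
  have hfun : Gker a b (m + 1) = fun y : ℝ =>
      (b - y) ^ (m + 2) * (((m : ℝ) + 1) * (b - y) + ((m : ℝ) + 3) * (y - a)) := by
    funext y; unfold Gker; push_cast; ring_nf
  rw [hfun]
  refine H.congr_deriv ?_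
  unfold Gker; ring

lemma trap_id (f : ℝ → ℝ) (a b : ℝ) (hab : a < b) :
    ∀ n, 2 ≤ n →
    (∀ k < n, ∀ t ∈ Set.Icc a b,
      HasDerivAt (iteratedDeriv k f) (iteratedDeriv (k + 1) f t) t) →
    IntervalIntegrable (iteratedDeriv n f) volume a b →
    (f a + f b) / 2 - (1 / (b - a)) * (∫ x in a..b, f x) -
      ∑ k ∈ Finset.Icc 2 (n - 1),
        (((k : ℝ) - 1) * (b - a) ^ k / (2 * (Nat.factorial (k + 1) : ℝ))) *
          iteratedDeriv k f a
    = ∫ x in a..b,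
        (Gker a b (n - 2) x / (2 * (b - a) * (Nat.factorial n : ℝ))) * iteratedDeriv n f x := by
  have hba : b - a ≠ 0 := sub_ne_zero.2 hab.ne'
  have huIcc : uIcc a b = Icc a b := uIcc_of_le hab.le
  intro n hn
  induction n, hn using Nat.le_induction with
  | base =>
    intro hf hint
    have hempty : Finset.Icc 2 (2 - 1) = (∅ : Finset ℕ) := by decide
    rw [hempty, Finset.sum_empty]
    -- first IBP
    have hu1 : ∀ x ∈ uIcc a b, HasDerivAt (fun y : ℝ => (b - y) * (y - a)) (a + b - 2 * x) x := by
      intro x _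
      have h1 : HasDerivAt (fun y : ℝ => b - y) (-1) x := (hasDerivAt_id x).const_sub b
      have h2 : HasDerivAt (fun y : ℝ => y - a) 1 x := (hasDerivAt_id x).sub_const a
      have := h1.mul h2
      refine this.congr_deriv ?_; ring
    have hv1 : ∀ x ∈ uIcc a b, HasDerivAt (iteratedDeriv 1 f) (iteratedDeriv 2 f x) x := by
      intro x hx; exact hf 1 one_lt_two x (huIcc ▸ hx)
    have hint1 : IntervalIntegrable (fun x : ℝ => a + b - 2 * x) volume a b := by
      apply Continuous.intervalIntegrable; fun_prop
    have step1 := integral_mul_deriv_eq_deriv_mul hu1 hv1 hint1 hint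
    -- second IBP
    have hu2 : ∀ x ∈ uIcc a b, HasDerivAt (fun y : ℝ => a + b - 2 * y) (-2) x := by
      intro x _
      have := ((hasDerivAt_id x).const_mul (2:ℝ)).const_sub (a + b)
      refine this.congr_deriv ?_; ring
    have hv2 : ∀ x ∈ uIcc a b, HasDerivAt f (iteratedDeriv 1 f x) x := by
      intro x hx
      have := hf 0 two_pos x (huIcc ▸ hx)
      simpa [iteratedDeriv_zero] using this
    have hintD1 : IntervalIntegrable (iteratedDeriv 1 f) volume a b := by
      apply ContinuousOn.intervalIntegrable
      intro t ht
      exact (hv1 t ht).continuousAt.continuousWithinAt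
    have hintc : IntervalIntegrable (fun _ : ℝ => (-2 : ℝ)) volume a b :=
      intervalIntegrable_const
    have step2 := integral_mul_deriv_eq_deriv_mul hu2 hv2 hintc hintD1
    have hflip : ∫ x in a..b, (fun y : ℝ => a + b - 2 * y) x * iteratedDeriv 1 f x
        = ∫ x in a..b, iteratedDeriv 1 f x * (fun y : ℝ => a + b - 2 * y) x := by
      congr 1; funext x; ring
    have hconst : (∫ x in a..b, (fun _ : ℝ => (-2:ℝ)) x * f x) = -2 * ∫ x in a..b, f x := by
      simp_rw [← intervalIntegral.integral_const_mul]
    -- rewrite target integrand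
    have hre : ∀ x : ℝ,
        (Gker a b (2 - 2) x / (2 * (b - a) * (Nat.factorial 2 : ℝ))) * iteratedDeriv 2 f x
        = (1 / (2 * (b - a))) * ((b - x) * (x - a) * iteratedDeriv 2 f x) := by
      intro x
      show (Gker a b 0 x / (2 * (b - a) * (2 : ℝ))) * iteratedDeriv 2 f x = _
      unfold Gker
      field_simp
      ring
    rw [show (∫ x in a..b,
        (Gker a b (2 - 2) x / (2 * (b - a) * (Nat.factorial 2 : ℝ))) * iteratedDeriv 2 f x)
        = (1 / (2 * (b - a))) * ∫ x in a..b, (b - x) * (x - a) * iteratedDeriv 2 f x by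
      rw [← intervalIntegral.integral_const_mul]; congr 1; funext x; exact hre x]
    have e1 : (∫ x in a..b, (b - x) * (x - a) * iteratedDeriv 2 f x)
        = ∫ x in a..b, (fun y : ℝ => (b - y) * (y - a)) x * iteratedDeriv 2 f x := rfl
    rw [e1, step1]
    rw [show (∫ x in a..b, (fun y : ℝ => a + b - 2 * y) x * iteratedDeriv 1 f x)
        = (a + b - 2 * b) * f b - (a + b - 2 * a) * f a - (-2 * ∫ x in a..b, f x) by
      rw [step2, hconst]]
    field_simp
    ring
  | succ n hn2 IH =>
    intro hf hint
    obtain ⟨m, rfl⟩ : ∃ m, n = m + 2 := ⟨n - 2, by omega⟩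
    have hfn : ∀ k < m + 2, ∀ t ∈ Set.Icc a b,
        HasDerivAt (iteratedDeriv k f) (iteratedDeriv (k + 1) f t) t :=
      fun k hk => hf k (by omega)
    have hvtop : ∀ x ∈ uIcc a b,
        HasDerivAt (iteratedDeriv (m + 2) f) (iteratedDeriv (m + 3) f x) x := by
      intro x hx
      exact hf (m + 2) (by omega) x (huIcc ▸ hx)
    have hintn : IntervalIntegrable (iteratedDeriv (m + 2) f) volume a b := by
      apply ContinuousOn.intervalIntegrable
      intro t ht; exact (hvtop t ht).continuousAt.continuousWithinAt
    have hIH := IH hfn hintn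
    have hfact : (Nat.factorial (m + 3) : ℝ) = ((m : ℝ) + 3) * (Nat.factorial (m + 2) : ℝ) := by
      rw [show m + 3 = (m + 2) + 1 from rfl, Nat.factorial_succ]; push_cast; ring
    have hfact2 : (Nat.factorial (m + 2) : ℝ) ≠ 0 := Nat.cast_ne_zero.2 (Nat.factorial_ne_zero _)
    have hm3 : ((m : ℝ) + 3) ≠ 0 := by positivity
    have hu : ∀ x ∈ uIcc a b,
        HasDerivAt (fun y => -(Gker a b (m + 1) y / (2 * (b - a) * (Nat.factorial (m + 3) : ℝ))))
          (Gker a b m x / (2 * (b - a) * (Nat.factorial (m + 2) : ℝ))) x := by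
      intro x _
      have h := ((hasDerivAt_Gker a b m x).div_const
        (2 * (b - a) * (Nat.factorial (m + 3) : ℝ))).neg
      refine h.congr_deriv ?_
      rw [hfact]
      field_simp
    have hu'int : IntervalIntegrable
        (fun x => Gker a b m x / (2 * (b - a) * (Nat.factorial (m + 2) : ℝ))) volume a b := by
      apply Continuous.intervalIntegrable
      exact (Gker_cont a b m).div_const _
    have step := integral_mul_deriv_eq_deriv_mul hu hvtop hu'int hint
    have hGb : Gker a b (m + 1) b = 0 := by unfold Gker; simp
    have hGa : Gker a b (m + 1) a = ((m : ℝ) + 1) * (b - a) ^ (m + 3) := by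
      unfold Gker; push_cast; ring
    have hneg : (∫ x in a..b,
        (fun y => -(Gker a b (m + 1) y / (2 * (b - a) * (Nat.factorial (m + 3) : ℝ)))) x *
          iteratedDeriv (m + 3) f x)
        = -∫ x in a..b,
            (Gker a b (m + 1) x / (2 * (b - a) * (Nat.factorial (m + 3) : ℝ))) *
              iteratedDeriv (m + 3) f x := by
      rw [← intervalIntegral.integral_neg]; congr 1; funext x; ring
    rw [hneg, hGb, hGa] at step
    -- split the sum
    have hsum : (∑ k ∈ Finset.Icc 2 (m + 2 + 1 - 1),
        (((k : ℝ) - 1) * (b - a) ^ k / (2 * (Nat.factorial (k + 1) : ℝ))) * iteratedDeriv k f a)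
        = (∑ k ∈ Finset.Icc 2 (m + 2 - 1),
            (((k : ℝ) - 1) * (b - a) ^ k / (2 * (Nat.factorial (k + 1) : ℝ))) *
              iteratedDeriv k f a)
          + ((((m + 2 : ℕ) : ℝ) - 1) * (b - a) ^ (m + 2) /
              (2 * (Nat.factorial (m + 2 + 1) : ℝ))) * iteratedDeriv (m + 2) f a := by
      rw [show m + 2 + 1 - 1 = (m + 1) + 1 from rfl, Finset.sum_Icc_succ_top (by omega)]
      simp only [show m + 1 + 1 = m + 2 from rfl, show m + 1 + 1 + 1 = m + 2 + 1 from rfl,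
        show m + 2 - 1 = m + 1 from rfl]
    rw [hsum]
    have hcoef : ((m : ℝ) + 1) * (b - a) ^ (m + 3) /
          (2 * (b - a) * (Nat.factorial (m + 3) : ℝ)) * iteratedDeriv (m + 2) f a
        = ((((m + 2 : ℕ) : ℝ) - 1) * (b - a) ^ (m + 2) /
            (2 * (Nat.factorial (m + 2 + 1) : ℝ))) * iteratedDeriv (m + 2) f a := by
      have hp : (b - a) ^ (m + 3) = (b - a) ^ (m + 2) * (b - a) := by ring
      rw [hp]
      push_cast
      rw [show (Nat.factorial (m + 2 + 1) : ℝ) = ((m : ℝ) + 3) * (Nat.factorial (m + 2) : ℝ)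
        from hfact]
      field_simp
      ring
    simp only [show m + 2 - 2 = m from rfl] at hIH
    simp only [show m + 2 + 1 - 2 = m + 1 from rfl, show m + 2 + 1 = m + 3 from rfl] at hcoef ⊢
    linear_combination hIH + step + hcoef

theorem stmt_7 (f : ℝ → ℝ) (a b : ℝ) (hab : a < b) (n : ℕ) (hn : 2 ≤ n)
    (hf : ∀ k < n, ∀ t ∈ Set.Icc a b,
      HasDerivAt (iteratedDeriv k f) (iteratedDeriv (k + 1) f t) t)
    (hint : IntervalIntegrable (iteratedDeriv n f) volume a b)
    (hq : ∀ u ∈ Set.Icc a b, ∀ v ∈ Set.Icc a b, ∀ α ∈ Set.Icc (0 : ℝ) 1,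
      |iteratedDeriv n f (α * u + (1 - α) * v)| ≤
        max |iteratedDeriv n f u| |iteratedDeriv n f v|) :
    |(f a + f b) / 2 - (1 / (b - a)) * (∫ x in a..b, f x) -
      ∑ k ∈ Finset.Icc 2 (n - 1),
        (((k : ℝ) - 1) * (b - a) ^ k / (2 * (Nat.factorial (k + 1) : ℝ))) *
          iteratedDeriv k f a| ≤
    ((b - a) ^ n * ((n : ℝ) - 1) / (2 * (Nat.factorial (n + 1) : ℝ))) *
      max |iteratedDeriv n f a| |iteratedDeriv n f b| := by
  have hba : b - a ≠ 0 := sub_ne_zero.2 hab.ne'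
  have hba' : (0:ℝ) < b - a := sub_pos.2 hab
  obtain ⟨m, rfl⟩ : ∃ m, n = m + 2 := ⟨n - 2, by omega⟩
  set M : ℝ := max |iteratedDeriv (m+2) f a| |iteratedDeriv (m+2) f b| with hM
  have hM0 : 0 ≤ M := le_trans (abs_nonneg _) (le_max_left _ _)
  set K : ℝ → ℝ := fun x => Gker a b m x / (2 * (b - a) * (Nat.factorial (m + 2) : ℝ)) with hK
  have hkey := trap_id f a b hab (m + 2) (by omega) hf hint
  simp only [show m + 2 - 2 = m from rfl] at hkey
  rw [hkey]
  -- nonnegativity of kernel on Icc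
  have hKnn : ∀ x ∈ Icc a b, 0 ≤ K x := by
    intro x hx
    have h1 : (0:ℝ) ≤ b - x := by linarith [hx.2]
    have h2 : (0:ℝ) ≤ x - a := by linarith [hx.1]
    have h3 : (0:ℝ) ≤ Gker a b m x := by
      unfold Gker
      have : (0:ℝ) ≤ (m:ℝ) := Nat.cast_nonneg m
      positivity
    have h4 : (0:ℝ) < 2 * (b - a) * (Nat.factorial (m + 2) : ℝ) := by positivity
    exact div_nonneg h3 h4.le
  -- pointwise bound via quasi-convexity
  have hptw : ∀ x ∈ Icc a b, |iteratedDeriv (m+2) f x| ≤ M := by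
    intro x hx
    have hα : (x - a) / (b - a) ∈ Icc (0:ℝ) 1 := by
      constructor
      · exact div_nonneg (by linarith [hx.1]) hba'.le
      · rw [div_le_one hba']; linarith [hx.2]
    have hb' : b ∈ Icc a b := ⟨hab.le, le_rfl⟩
    have ha' : a ∈ Icc a b := ⟨le_rfl, hab.le⟩
    have h := hq b hb' a ha' _ hα
    have hx' : (x - a) / (b - a) * b + (1 - (x - a) / (b - a)) * a = x := by
      field_simp
      ring
    rw [hx'] at h
    calc |iteratedDeriv (m+2) f x| ≤ max |iteratedDeriv (m+2) f b| |iteratedDeriv (m+2) f a| := h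
      _ = M := max_comm _ _
  -- integrability facts
  have hKcont : Continuous K := (Gker_cont a b m).div_const _
  have hKD : IntervalIntegrable (fun x => K x * iteratedDeriv (m+2) f x) volume a b :=
    hint.continuousOn_mul hKcont.continuousOn
  have habs : IntervalIntegrable (fun x => |K x * iteratedDeriv (m+2) f x|) volume a b := hKD.abs
  have hKM : IntervalIntegrable (fun x => K x * M) volume a b :=
    (hKcont.mul continuous_const).intervalIntegrable a b
  -- value of the kernel integral
  have hG1 : ∀ x ∈ uIcc a b,
      HasDerivAt (fun y => -(Gker a b (m+1) y / ((m:ℝ) + 3))) (Gker a b m x) x := by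
    intro x _
    have h := ((hasDerivAt_Gker a b m x).div_const ((m:ℝ) + 3)).neg
    refine h.congr_deriv ?_
    have hm3 : ((m:ℝ) + 3) ≠ 0 := by positivity
    field_simp
  have hGint : IntervalIntegrable (Gker a b m) volume a b :=
    (Gker_cont a b m).intervalIntegrable a b
  have hGval : (∫ x in a..b, Gker a b m x) = ((m:ℝ)+1) * (b - a)^(m+3) / ((m:ℝ)+3) := by
    rw [integral_eq_sub_of_hasDerivAt hG1 hGint]
    have hGb : Gker a b (m + 1) b = 0 := by unfold Gker; simp
    have hGa : Gker a b (m + 1) a = ((m : ℝ) + 1) * (b - a) ^ (m + 3) := by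
      unfold Gker; push_cast; ring
    rw [hGb, hGa]
    ring
  have hKval : (∫ x in a..b, K x * M)
      = ((b - a) ^ (m+2) * (((m+2:ℕ) : ℝ) - 1) / (2 * (Nat.factorial (m + 2 + 1) : ℝ))) * M := by
    have : (∫ x in a..b, K x * M)
        = (∫ x in a..b, Gker a b m x) / (2 * (b - a) * (Nat.factorial (m + 2) : ℝ)) * M := by
      rw [← intervalIntegral.integral_div, ← intervalIntegral.integral_mul_const]
    rw [this, hGval]
    have hfact : (Nat.factorial (m + 2 + 1) : ℝ) = ((m : ℝ) + 3) * (Nat.factorial (m + 2) : ℝ) := by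
      rw [show m + 2 + 1 = (m + 2) + 1 from rfl, Nat.factorial_succ]; push_cast; ring
    rw [hfact]
    have hfact2 : (Nat.factorial (m + 2) : ℝ) ≠ 0 := Nat.cast_ne_zero.2 (Nat.factorial_ne_zero _)
    have hm3 : ((m:ℝ) + 3) ≠ 0 := by positivity
    push_cast
    field_simp
    ring
  calc |∫ x in a..b, K x * iteratedDeriv (m+2) f x|
      ≤ ∫ x in a..b, |K x * iteratedDeriv (m+2) f x| :=
        intervalIntegral.abs_integral_le_integral_abs hab.le
    _ ≤ ∫ x in a..b, K x * M := by
        apply intervalIntegral.integral_mono_on hab.le habs hKM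
        intro x hx
        rw [abs_mul, abs_of_nonneg (hKnn x hx)]
        exact mul_le_mul_of_nonneg_left (hptw x hx) (hKnn x hx)
    _ = ((b - a) ^ (m+2) * (((m+2:ℕ) : ℝ) - 1) / (2 * (Nat.factorial (m + 2 + 1) : ℝ))) * M :=
        hKval
end

section
/- Let f : [a,b] → ℝ be n-times differentiable (n ≥ 2) and suppose |f^{(n)}|^q is quasi-convex on [a,b], where q > 1 and 1/p + 1/q = 1. Then |(f(a)+f(b))/2 - (1/(b-a))∫_a^b f(x) dx - Σ_{k=2}^{n-1} ((k-1)(b-a)^k/(2(k+1)!)) f^{(k)}(a)| ≤ ((b-a)^n/(2^{1+1/q} n!))·(1/(np-p+1))^{1/p}·((n^{q+1}-(n-2)^{q+1})/(q+1))^{1/q}·(max{|f^{(n)}(a)|^q, |f^{(n)}(b)|^q})^{1/q}. -/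
open MeasureTheory Set intervalIntegral

lemma memIcc_aux {a b : ℝ} (hab : a ≤ b) {t : ℝ} (ht : t ∈ Set.Icc (0:ℝ) 1) :
    t * a + (1 - t) * b ∈ Set.Icc a b := by
  obtain ⟨h0, h1⟩ := ht
  constructor <;> nlinarith

lemma hasDerivAt_X (a b t : ℝ) : HasDerivAt (fun t : ℝ => t * a + (1 - t) * b) (a - b) t := by
  have := ((hasDerivAt_id t).mul_const a).add (((hasDerivAt_const t (1:ℝ)).sub (hasDerivAt_id t)).mul_const b)
  exact this.congr_deriv (by ring)

lemma ibp_step (g g' : ℝ → ℝ) (a b : ℝ) (hab : a < b) (m : ℕ) (hm : 1 ≤ m)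
    (hg : ∀ t ∈ Set.Icc a b, HasDerivAt g (g' t) t)
    (hg' : IntervalIntegrable (fun t => g' (t * a + (1 - t) * b)) volume 0 1) :
    ∫ t in (0:ℝ)..1, t ^ (m - 1) * ((m : ℝ) - 2 * t) * g (t * a + (1 - t) * b)
      = ((m : ℝ) - 1) / ((m : ℝ) + 1) * g a +
        (b - a) / ((m : ℝ) + 1) *
          ∫ t in (0:ℝ)..1, t ^ m * (((m : ℝ) + 1) - 2 * t) * g' (t * a + (1 - t) * b) := by
  obtain ⟨m, rfl⟩ : ∃ m', m = m' + 1 := ⟨m - 1, (Nat.succ_pred_eq_of_pos hm).symm⟩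
  set X : ℝ → ℝ := fun t => t * a + (1 - t) * b with hX
  set c : ℝ := (m : ℝ) + 1 + 1 with hc
  have hc0 : c ≠ 0 := by positivity
  set u : ℝ → ℝ := fun t => t ^ (m + 1) * (c - 2 * t) / c with hu
  set u' : ℝ → ℝ := fun t => t ^ m * (((m : ℝ) + 1) - 2 * t) with hu'
  set v : ℝ → ℝ := fun t => g (X t) with hv
  set v' : ℝ → ℝ := fun t => (a - b) * g' (X t) with hv'
  have hXmem : ∀ t ∈ Set.uIcc (0:ℝ) 1, X t ∈ Set.Icc a b := by
    intro t ht
    rw [Set.uIcc_of_le (by norm_num : (0:ℝ) ≤ 1)] at ht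
    exact memIcc_aux hab.le ht
  have hud : ∀ t ∈ Set.uIcc (0:ℝ) 1, HasDerivAt u (u' t) t := by
    intro t _
    have h1 : HasDerivAt (fun t : ℝ => t ^ (m + 1)) (((m : ℝ) + 1) * t ^ m) t := by
      simpa using hasDerivAt_pow (m + 1) t
    have h2 : HasDerivAt (fun t : ℝ => c - 2 * t) (-2) t := by
      exact ((hasDerivAt_const t c).sub ((hasDerivAt_id t).const_mul (2:ℝ))).congr_deriv (by ring)
    have h := (h1.mul h2).div_const c
    refine h.congr_deriv ?_
    simp only [hu']
    field_simp
    ring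
  have hvd : ∀ t ∈ Set.uIcc (0:ℝ) 1, HasDerivAt v (v' t) t := by
    intro t ht
    have h := (hg _ (hXmem t ht)).comp t (hasDerivAt_X a b t)
    exact h.congr_deriv (by simp only [hv']; ring)
  have hu'int : IntervalIntegrable u' volume 0 1 := by
    apply Continuous.intervalIntegrable; continuity
  have hv'int : IntervalIntegrable v' volume 0 1 := hg'.const_mul (a - b)
  have key := intervalIntegral.integral_mul_deriv_eq_deriv_mul hud hvd hu'int hv'int
  -- key : ∫ t in 0..1, u t * v' t = u 1 * v 1 - u 0 * v 0 - ∫ t in 0..1, u' t * v t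
  have h1 : (∫ t in (0:ℝ)..1, u' t * v t)
      = u 1 * v 1 - u 0 * v 0 - ∫ t in (0:ℝ)..1, u t * v' t := by linarith [key]
  have hX1 : X 1 = a := by simp [hX]
  have huv : (∫ t in (0:ℝ)..1, u t * v' t)
      = ((a - b) / c) * ∫ t in (0:ℝ)..1, t ^ (m + 1) * (c - 2 * t) * g' (X t) := by
    rw [← intervalIntegral.integral_const_mul]
    apply intervalIntegral.integral_congr
    intro t _
    simp only [hu, hv']
    field_simp
  have hLHS : (∫ t in (0:ℝ)..1, t ^ (m + 1 - 1) * ((↑(m + 1) : ℝ) - 2 * t) * g (t * a + (1 - t) * b))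
      = ∫ t in (0:ℝ)..1, u' t * v t := by
    apply intervalIntegral.integral_congr
    intro t _
    simp only [hu', hv, hX, Nat.add_sub_cancel]
    push_cast
    ring
  have hu1 : u 1 = ((↑(m + 1) : ℝ) - 1) / ((↑(m + 1) : ℝ) + 1) := by
    simp only [hu, hc]
    push_cast
    ring
  have hu0 : u 0 = 0 := by simp [hu]
  rw [hLHS, h1, huv, hu1, hu0]
  have hv1 : v 1 = g a := by simp [hv, hX1]
  rw [hv1]
  simp only [hX, hc]
  push_cast
  ring

lemma base_case (f f' : ℝ → ℝ) (a b : ℝ) (hab : a < b)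
    (hf0 : ∀ t ∈ Set.Icc a b, HasDerivAt f (f' t) t)
    (hf'int : IntervalIntegrable (fun t => f' (t * a + (1 - t) * b)) volume 0 1) :
    (f a + f b) / 2 - (1 / (b - a)) * ∫ x in a..b, f x
      = ((b - a) / 2) * ∫ t in (0:ℝ)..1, (1 - 2 * t) * f' (t * a + (1 - t) * b) := by
  have hba : b - a ≠ 0 := sub_ne_zero.mpr hab.ne'
  have hab' : a - b ≠ 0 := sub_ne_zero.mpr hab.ne
  set X : ℝ → ℝ := fun t => t * a + (1 - t) * b with hX
  set u : ℝ → ℝ := fun t => 1 - 2 * t with hu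
  set v : ℝ → ℝ := fun t => f (X t) / (a - b) with hv
  set v' : ℝ → ℝ := fun t => f' (X t) with hv'
  have hXmem : ∀ t ∈ Set.uIcc (0:ℝ) 1, X t ∈ Set.Icc a b := by
    intro t ht
    rw [Set.uIcc_of_le (by norm_num : (0:ℝ) ≤ 1)] at ht
    obtain ⟨h0, h1⟩ := ht
    simp only [hX]
    constructor <;> nlinarith [hab.le]
  have hud : ∀ t ∈ Set.uIcc (0:ℝ) 1, HasDerivAt u (-2) t := by
    intro t _
    exact ((hasDerivAt_const t (1:ℝ)).sub ((hasDerivAt_id t).const_mul (2:ℝ))).congr_deriv (by ring)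
  have hXd : ∀ t : ℝ, HasDerivAt X (a - b) t := by
    intro t
    have := ((hasDerivAt_id t).mul_const a).add
      (((hasDerivAt_const t (1:ℝ)).sub (hasDerivAt_id t)).mul_const b)
    exact this.congr_deriv (by ring)
  have hvd : ∀ t ∈ Set.uIcc (0:ℝ) 1, HasDerivAt v (v' t) t := by
    intro t ht
    have h := (((hf0 _ (hXmem t ht)).comp t (hXd t)).div_const (a - b))
    refine h.congr_deriv ?_
    exact mul_div_cancel_right₀ _ hab'
  have hu'int : IntervalIntegrable (fun _ : ℝ => (-2 : ℝ)) volume 0 1 :=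
    intervalIntegrable_const
  have key := intervalIntegral.integral_mul_deriv_eq_deriv_mul hud hvd hu'int hf'int
  -- ∫ u * v' = u 1 * v 1 - u 0 * v 0 - ∫ (-2) * v
  have hXint : (∫ t in (0:ℝ)..1, f (X t)) = (1 / (b - a)) * ∫ x in a..b, f x := by
    have h := intervalIntegral.integral_comp_mul_add (a := (0:ℝ)) (b := (1:ℝ)) f hab' b
    have he : (∫ t in (0:ℝ)..1, f (X t)) = ∫ t in (0:ℝ)..1, f ((a-b) * t + b) := by
      apply intervalIntegral.integral_congr; intro t _; simp [hX]; ring_nf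
    rw [he, h]
    simp only [mul_zero, zero_add, mul_one]
    rw [show a - b + b = a from by ring, intervalIntegral.integral_symm a b]
    field_simp
    ring_nf
    rw [← sub_mul, ← mul_sub, mul_assoc, mul_inv_cancel₀ hab', mul_one]
  have h2 : (∫ t in (0:ℝ)..1, (-2 : ℝ) * v t) = (-2 / (a - b)) * ∫ t in (0:ℝ)..1, f (X t) := by
    rw [← intervalIntegral.integral_const_mul]
    apply intervalIntegral.integral_congr; intro t _
    simp [hv]; ring
  have hu1 : u 1 = -1 := by simp [hu]; norm_num
  have hu0 : u 0 = 1 := by simp [hu]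
  have hv1 : v 1 = f a / (a - b) := by simp [hv, hX]
  have hv0 : v 0 = f b / (a - b) := by simp [hv, hX]
  have keyl : (∫ t in (0:ℝ)..1, u t * v' t)
      = u 1 * v 1 - u 0 * v 0 - ∫ t in (0:ℝ)..1, (-2 : ℝ) * v t := key
  rw [hu1, hu0, hv1, hv0, h2, hXint] at keyl
  have hgoal : (∫ t in (0:ℝ)..1, (1 - 2*t) * f' (t * a + (1 - t) * b))
      = ∫ t in (0:ℝ)..1, u t * v' t := by
    apply intervalIntegral.integral_congr; intro t _; simp [hu, hv', hX]
  rw [hgoal, keyl]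
  field_simp
  ring

lemma integrable_comp_aux (g : ℝ → ℝ) (a b : ℝ) (hab : a < b)
    (h : IntervalIntegrable g volume a b) :
    IntervalIntegrable (fun t => g (t * a + (1 - t) * b)) volume 0 1 := by
  have hab' : a - b ≠ 0 := sub_ne_zero.mpr hab.ne
  have h1 := (h.comp_add_right b).comp_mul_left (c := a - b)
  have h2 : IntervalIntegrable (fun t => g ((a - b) * t + b)) volume 1 0 := by
    simpa [div_self hab'] using h1
  have he : (fun t : ℝ => g (t * a + (1 - t) * b)) = fun t => g ((a - b) * t + b) := by
    funext t; ring_nf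
  rw [he]
  exact h2.symm

lemma cont_comp_aux (g : ℝ → ℝ) (a b : ℝ) (hab : a < b)
    (h : ∀ t ∈ Set.Icc a b, ContinuousAt g t) :
    IntervalIntegrable (fun t => g (t * a + (1 - t) * b)) volume 0 1 := by
  apply ContinuousOn.intervalIntegrable
  rw [Set.uIcc_of_le (by norm_num : (0:ℝ) ≤ 1)]
  intro t ht
  have hmem : t * a + (1 - t) * b ∈ Set.Icc a b := memIcc_aux hab.le ht
  have hc : ContinuousAt (fun t : ℝ => t * a + (1 - t) * b) t := by fun_prop
  have : ContinuousAt (fun t : ℝ => g (t * a + (1 - t) * b)) t :=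
    ContinuousAt.comp (h _ hmem) hc
  exact this.continuousWithinAt

lemma identity_lemma (f : ℝ → ℝ) (a b : ℝ) (hab : a < b) (n : ℕ)
    (hf : ∀ k < n, ∀ t ∈ Set.Icc a b,
      HasDerivAt (iteratedDeriv k f) (iteratedDeriv (k + 1) f t) t)
    (hint : IntervalIntegrable (iteratedDeriv n f) volume a b) :
    ∀ m, 1 ≤ m → m ≤ n →
      (f a + f b) / 2 - (1 / (b - a)) * (∫ x in a..b, f x) -
        ∑ k ∈ Finset.Icc 2 (m - 1),
          (((k : ℝ) - 1) * (b - a) ^ k / (2 * (Nat.factorial (k + 1) : ℝ))) *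
            iteratedDeriv k f a
      = ((b - a) ^ m / (2 * (Nat.factorial m : ℝ))) *
          ∫ t in (0:ℝ)..1, t ^ (m - 1) * ((m : ℝ) - 2 * t) *
            iteratedDeriv m f (t * a + (1 - t) * b) := by
  -- integrability of composed derivatives
  have hI : ∀ k ≤ n, IntervalIntegrable
      (fun t => iteratedDeriv k f (t * a + (1 - t) * b)) volume 0 1 := by
    intro k hk
    rcases eq_or_lt_of_le hk with rfl | hk'
    · exact integrable_comp_aux _ a b hab hint
    · exact cont_comp_aux _ a b hab (fun t ht => (hf k hk' t ht).continuousAt)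
  intro m hm
  induction m, hm using Nat.le_induction with
  | base =>
    intro h1n
    have hb := base_case f (iteratedDeriv 1 f) a b hab
      (fun t ht => by simpa using hf 0 h1n t ht) (hI 1 h1n)
    have he : Finset.Icc 2 (1 - 1) = (∅ : Finset ℕ) := by decide
    rw [he, Finset.sum_empty, sub_zero, hb]
    norm_num
  | succ m hm ih =>
    intro hsn
    obtain ⟨j, rfl⟩ : ∃ j, m = j + 1 := ⟨m - 1, (Nat.succ_pred_eq_of_pos hm).symm⟩
    set m := j + 1 with hmdef
    have hmn : m < n := hsn
    have ihm := ih hmn.le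
    have step := ibp_step (iteratedDeriv m f) (iteratedDeriv (m + 1) f) a b hab m hm
      (hf m hmn) (hI (m + 1) hsn)
    have hsum : ∑ k ∈ Finset.Icc 2 (m + 1 - 1),
        (((k : ℝ) - 1) * (b - a) ^ k / (2 * (Nat.factorial (k + 1) : ℝ))) * iteratedDeriv k f a
        = (∑ k ∈ Finset.Icc 2 (m - 1),
            (((k : ℝ) - 1) * (b - a) ^ k / (2 * (Nat.factorial (k + 1) : ℝ))) *
              iteratedDeriv k f a)
          + (((m : ℝ) - 1) * (b - a) ^ m / (2 * (Nat.factorial (m + 1) : ℝ))) *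
              iteratedDeriv m f a := by
      rcases Nat.eq_zero_or_pos j with rfl | hj
      · norm_num
      · have h2 : 2 ≤ j + 1 := by omega
        rw [Nat.add_sub_cancel, hmdef, Finset.sum_Icc_succ_top h2, Nat.add_sub_cancel]
    rw [hsum]
    rw [sub_add_eq_sub_sub, ihm, step]
    have hfac : (Nat.factorial (m + 1) : ℝ) = ((m : ℝ) + 1) * (Nat.factorial m : ℝ) := by
      rw [Nat.factorial_succ]; push_cast; ring
    have hm1 : ((m : ℝ) + 1) ≠ 0 := by positivity
    have hfm : (Nat.factorial m : ℝ) ≠ 0 := by positivity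
    have hcast : ((m + 1 : ℕ) : ℝ) = (m : ℝ) + 1 := by push_cast; ring
    rw [Nat.add_sub_cancel, hfac, hcast]
    field_simp
    ring

lemma holder_aux (n : ℕ) (hn : 2 ≤ n) (p q : ℝ) (hp : 1 < p) (hq1 : 1 < q)
    (hpq : 1 / p + 1 / q = 1) (F : ℝ → ℝ) (hF : IntervalIntegrable F volume 0 1)
    (M : ℝ) (hM : ∀ t ∈ Set.Icc (0:ℝ) 1, |F t| ^ q ≤ M) :
    |∫ t in (0:ℝ)..1, t ^ (n - 1) * ((n : ℝ) - 2 * t) * F t|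
      ≤ (1 / ((n : ℝ) * p - p + 1)) ^ (1 / p) *
        (((n : ℝ) ^ (q + 1) - ((n : ℝ) - 2) ^ (q + 1)) / (2 * (q + 1))) ^ (1 / q) *
        M ^ (1 / q) := by
  have hq0 : (0:ℝ) < q := lt_trans one_pos hq1
  have hp0 : (0:ℝ) < p := lt_trans one_pos hp
  have hn2 : (2:ℝ) ≤ (n:ℝ) := by exact_mod_cast hn
  have hM0 : 0 ≤ M := le_trans (Real.rpow_nonneg (abs_nonneg _) q) (hM 0 (by norm_num))
  set μ : Measure ℝ := volume.restrict (Set.Ioc (0:ℝ) 1) with hμ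
  haveI : IsFiniteMeasure μ := ⟨by rw [Measure.restrict_apply_univ]; simp⟩
  have hconj : p.HolderConjugate q := Real.holderConjugate_iff.mpr ⟨hp, by rw [← one_div, ← one_div]; exact hpq⟩
  set φ : ℝ → ℝ := fun t => t ^ (n - 1) with hφ
  set ψ : ℝ → ℝ := fun t => ((n : ℝ) - 2 * t) * |F t| with hψ
  have hFmeas : AEStronglyMeasurable F μ := hF.1.aestronglyMeasurable
  have hφcont : Continuous φ := by fun_prop
  have hφmem : MemLp φ (ENNReal.ofReal p) μ := by
    apply MemLp.of_bound hφcont.aestronglyMeasurable 1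
    rw [hμ, ae_restrict_iff' measurableSet_Ioc]
    refine ae_of_all _ fun t ht => ?_
    rw [Real.norm_eq_abs, abs_of_nonneg (pow_nonneg ht.1.le _)]
    exact pow_le_one₀ ht.1.le ht.2
  have hFle : ∀ t ∈ Set.Icc (0:ℝ) 1, |F t| ≤ M ^ (1/q) := by
    intro t ht
    have h1 : (|F t| ^ q) ^ (1/q) ≤ M ^ (1/q) :=
      Real.rpow_le_rpow (Real.rpow_nonneg (abs_nonneg _) q) (hM t ht) (by positivity)
    rwa [← Real.rpow_mul (abs_nonneg _), mul_one_div, div_self (ne_of_gt hq0),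
      Real.rpow_one] at h1
  have hψmem : MemLp ψ (ENNReal.ofReal q) μ := by
    have hψmeas : AEStronglyMeasurable ψ μ := by
      apply AEStronglyMeasurable.mul
      · exact (Continuous.aestronglyMeasurable (by fun_prop))
      · exact hFmeas.norm.congr (ae_of_all _ fun t => (Real.norm_eq_abs (F t)))
    apply MemLp.of_bound hψmeas ((n : ℝ) * M ^ (1/q))
    rw [hμ, ae_restrict_iff' measurableSet_Ioc]
    refine ae_of_all _ fun t ht => ?_
    have h1 : (0:ℝ) ≤ (n : ℝ) - 2 * t := by nlinarith [ht.1, ht.2]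
    rw [Real.norm_eq_abs, hψ, abs_mul, abs_of_nonneg h1, abs_abs]
    have h2 : (n : ℝ) - 2 * t ≤ (n : ℝ) := by nlinarith [ht.1]
    exact mul_le_mul h2 (hFle t ⟨ht.1.le, ht.2⟩) (abs_nonneg _) (by positivity)
  have hφnn : 0 ≤ᵐ[μ] φ := by
    filter_upwards [ae_restrict_mem measurableSet_Ioc] with t ht
    exact pow_nonneg ht.1.le _
  have hψnn : 0 ≤ᵐ[μ] ψ := by
    filter_upwards [ae_restrict_mem measurableSet_Ioc] with t ht
    exact mul_nonneg (by nlinarith [ht.1, ht.2]) (abs_nonneg (F t))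
  have holder := MeasureTheory.integral_mul_le_Lp_mul_Lq_of_nonneg hconj hφnn hψnn hφmem hψmem
  -- step 1 : |∫| ≤ ∫ φψ ∂μ
  have step1 : |∫ t in (0:ℝ)..1, t ^ (n - 1) * ((n : ℝ) - 2 * t) * F t|
      ≤ ∫ t, φ t * ψ t ∂μ := by
    refine le_trans (intervalIntegral.abs_integral_le_integral_abs zero_le_one) (le_of_eq ?_)
    rw [intervalIntegral.integral_of_le zero_le_one]
    apply setIntegral_congr_fun measurableSet_Ioc
    intro t ht
    have h1 : (0:ℝ) ≤ (n : ℝ) - 2 * t := by nlinarith [ht.1, ht.2]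
    show |t ^ (n - 1) * ((n : ℝ) - 2 * t) * F t| = φ t * ψ t
    simp only [hφ, hψ]
    rw [abs_mul, abs_mul, abs_of_nonneg (pow_nonneg ht.1.le _), abs_of_nonneg h1, mul_assoc]
  -- step 4 : value of ∫ φ^p
  have hr : (-1:ℝ) < ((n - 1 : ℕ) : ℝ) * p := by
    have : (0:ℝ) ≤ ((n - 1 : ℕ) : ℝ) * p := by positivity
    linarith
  have hφval : (∫ t, φ t ^ p ∂μ) = 1 / ((n:ℝ) * p - p + 1) := by
    have he : (∫ t, φ t ^ p ∂μ) = ∫ t in (0:ℝ)..1, t ^ (((n - 1 : ℕ) : ℝ) * p) := by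
      rw [hμ, ← intervalIntegral.integral_of_le zero_le_one]
      apply intervalIntegral.integral_congr
      intro t ht
      rw [Set.uIcc_of_le zero_le_one] at ht
      show φ t ^ p = t ^ (((n - 1 : ℕ) : ℝ) * p)
      simp only [hφ]
      rw [← Real.rpow_natCast t (n - 1), ← Real.rpow_mul ht.1]
    rw [he, integral_rpow (Or.inl hr)]
    rw [Real.one_rpow, Real.zero_rpow (by positivity)]
    have hc : ((n - 1 : ℕ) : ℝ) = (n:ℝ) - 1 := by
      push_cast [Nat.cast_sub (by omega : 1 ≤ n)]; ring
    rw [hc]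
    ring_nf
  -- step 5 : bound on ∫ ψ^q
  have hKnn : 0 ≤ ((n : ℝ) ^ (q + 1) - ((n : ℝ) - 2) ^ (q + 1)) / (2 * (q + 1)) := by
    have := Real.rpow_le_rpow (by linarith : (0:ℝ) ≤ (n:ℝ) - 2) (by linarith : (n:ℝ) - 2 ≤ (n:ℝ)) (by positivity : (0:ℝ) ≤ q + 1)
    exact div_nonneg (by linarith) (by positivity)
  -- integrability of ψ^q
  have hψqint : Integrable (fun t => ψ t ^ q) μ := by
    have h1 := hψmem.integrable_norm_rpow (by simp [hq0] : ENNReal.ofReal q ≠ 0)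
      (by simp : ENNReal.ofReal q ≠ ⊤)
    rw [ENNReal.toReal_ofReal hq0.le] at h1
    apply h1.congr
    filter_upwards [hψnn] with t ht
    rw [Real.norm_eq_abs, abs_of_nonneg ht]
  have hbc : Continuous (fun t : ℝ => ((n : ℝ) - 2 * t) ^ q * M) := by
    apply Continuous.mul _ continuous_const
    exact Continuous.rpow_const (by fun_prop) (fun x => Or.inr hq0.le)
  have hbint : Integrable (fun t : ℝ => ((n : ℝ) - 2 * t) ^ q * M) μ :=
    hbc.integrableOn_Ioc
  have hmono : (∫ t, ψ t ^ q ∂μ) ≤ ∫ t, ((n : ℝ) - 2 * t) ^ q * M ∂μ := by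
    apply integral_mono_ae hψqint hbint
    filter_upwards [ae_restrict_mem measurableSet_Ioc] with t ht
    have h1 : (0:ℝ) ≤ (n : ℝ) - 2 * t := by nlinarith [ht.1, ht.2]
    show ψ t ^ q ≤ ((n : ℝ) - 2 * t) ^ q * M
    simp only [hψ]
    rw [Real.mul_rpow h1 (abs_nonneg _)]
    exact mul_le_mul_of_nonneg_left (hM t ⟨ht.1.le, ht.2⟩) (Real.rpow_nonneg h1 q)
  have hJq : (∫ t, ((n : ℝ) - 2 * t) ^ q * M ∂μ)
      = M * (((n : ℝ) ^ (q + 1) - ((n : ℝ) - 2) ^ (q + 1)) / (2 * (q + 1))) := by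
    rw [hμ, ← intervalIntegral.integral_of_le zero_le_one,
      intervalIntegral.integral_mul_const]
    have hcomp := intervalIntegral.integral_comp_mul_add (a := (0:ℝ)) (b := 1)
      (fun u : ℝ => u ^ q) (by norm_num : (-2:ℝ) ≠ 0) (n : ℝ)
    have he : (∫ t in (0:ℝ)..1, ((n : ℝ) - 2 * t) ^ q)
        = ∫ t in (0:ℝ)..1, (-2 * t + (n : ℝ)) ^ q := by
      apply intervalIntegral.integral_congr
      intro t _
      congr 1
      ring
    rw [he, hcomp]
    rw [show (-2:ℝ) * 0 + (n:ℝ) = (n:ℝ) from by ring, show (-2:ℝ) * 1 + (n:ℝ) = (n:ℝ) - 2 from by ring]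
    rw [intervalIntegral.integral_symm ((n:ℝ) - 2) (n:ℝ),
      integral_rpow (Or.inl (by linarith : (-1:ℝ) < q))]
    rw [smul_eq_mul]
    field_simp
  have hψq_nonneg : 0 ≤ ∫ t, ψ t ^ q ∂μ := by
    apply MeasureTheory.integral_nonneg_of_ae
    filter_upwards [hψnn] with t ht
    exact Real.rpow_nonneg ht q
  have hfinal : (∫ t, ψ t ^ q ∂μ) ^ (1/q)
      ≤ (((n : ℝ) ^ (q + 1) - ((n : ℝ) - 2) ^ (q + 1)) / (2 * (q + 1))) ^ (1/q) * M ^ (1/q) := by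
    have h1 : (∫ t, ψ t ^ q ∂μ) ^ (1/q)
        ≤ (M * (((n : ℝ) ^ (q + 1) - ((n : ℝ) - 2) ^ (q + 1)) / (2 * (q + 1)))) ^ (1/q) :=
      Real.rpow_le_rpow hψq_nonneg (hmono.trans (le_of_eq hJq)) (by positivity)
    rwa [Real.mul_rpow hM0 hKnn, mul_comm] at h1
  calc |∫ t in (0:ℝ)..1, t ^ (n - 1) * ((n : ℝ) - 2 * t) * F t|
      ≤ ∫ t, φ t * ψ t ∂μ := step1
    _ ≤ (∫ t, φ t ^ p ∂μ) ^ (1/p) * (∫ t, ψ t ^ q ∂μ) ^ (1/q) := holder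
    _ ≤ (∫ t, φ t ^ p ∂μ) ^ (1/p) *
        ((((n : ℝ) ^ (q + 1) - ((n : ℝ) - 2) ^ (q + 1)) / (2 * (q + 1))) ^ (1/q) * M ^ (1/q)) := by
        apply mul_le_mul_of_nonneg_left hfinal
        apply Real.rpow_nonneg
        apply MeasureTheory.integral_nonneg_of_ae
        filter_upwards [hφnn] with t ht
        exact Real.rpow_nonneg ht p
    _ = (1 / ((n : ℝ) * p - p + 1)) ^ (1 / p) *
        (((n : ℝ) ^ (q + 1) - ((n : ℝ) - 2) ^ (q + 1)) / (2 * (q + 1))) ^ (1 / q) *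
        M ^ (1 / q) := by rw [hφval]; ring

theorem stmt_8 (f : ℝ → ℝ) (a b : ℝ) (hab : a < b) (n : ℕ) (hn : 2 ≤ n)
    (p q : ℝ) (hp : 1 < p) (hq1 : 1 < q) (hpq : 1 / p + 1 / q = 1)
    (hf : ∀ k < n, ∀ t ∈ Set.Icc a b,
      HasDerivAt (iteratedDeriv k f) (iteratedDeriv (k + 1) f t) t)
    (hint : IntervalIntegrable (iteratedDeriv n f) volume a b)
    (hq : ∀ u ∈ Set.Icc a b, ∀ v ∈ Set.Icc a b, ∀ α ∈ Set.Icc (0 : ℝ) 1,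
      |iteratedDeriv n f (α * u + (1 - α) * v)| ^ q ≤
        max (|iteratedDeriv n f u| ^ q) (|iteratedDeriv n f v| ^ q)) :
    |(f a + f b) / 2 - (1 / (b - a)) * (∫ x in a..b, f x) -
      ∑ k ∈ Finset.Icc 2 (n - 1),
        (((k : ℝ) - 1) * (b - a) ^ k / (2 * (Nat.factorial (k + 1) : ℝ))) *
          iteratedDeriv k f a| ≤
    ((b - a) ^ n / ((2 : ℝ) ^ (1 + 1 / q) * (Nat.factorial n : ℝ))) *
      (1 / ((n : ℝ) * p - p + 1)) ^ (1 / p) *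
      (((n : ℝ) ^ (q + 1) - ((n : ℝ) - 2) ^ (q + 1)) / (q + 1)) ^ (1 / q) *
      (max (|iteratedDeriv n f a| ^ q) (|iteratedDeriv n f b| ^ q)) ^ (1 / q) := by
  have hq0 : (0:ℝ) < q := lt_trans one_pos hq1
  have hn2 : (2:ℝ) ≤ (n:ℝ) := by exact_mod_cast hn
  set F : ℝ → ℝ := fun t => iteratedDeriv n f (t * a + (1 - t) * b) with hF
  set M : ℝ := max (|iteratedDeriv n f a| ^ q) (|iteratedDeriv n f b| ^ q) with hMdef
  have hM0 : 0 ≤ M := le_trans (Real.rpow_nonneg (abs_nonneg _) q) (le_max_left _ _)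
  have hid := identity_lemma f a b hab n hf hint n (by omega) le_rfl
  have hFint : IntervalIntegrable F volume 0 1 := integrable_comp_aux _ a b hab hint
  have hM : ∀ t ∈ Set.Icc (0:ℝ) 1, |F t| ^ q ≤ M := fun t ht =>
    hq a ⟨le_rfl, hab.le⟩ b ⟨hab.le, le_rfl⟩ t ht
  have hhol := holder_aux n hn p q hp hq1 hpq F hFint M hM
  have hfacpos : (0:ℝ) < (Nat.factorial n : ℝ) := by positivity
  have hba : (0:ℝ) < b - a := sub_pos.mpr hab
  have hc : (0:ℝ) < (b - a) ^ n / (2 * (Nat.factorial n : ℝ)) := by positivity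
  rw [hid, abs_mul, abs_of_pos hc]
  have hstep := mul_le_mul_of_nonneg_left hhol hc.le
  refine le_trans hstep (le_of_eq ?_)
  -- algebra
  have hK : 0 ≤ ((n : ℝ) ^ (q + 1) - ((n : ℝ) - 2) ^ (q + 1)) / (q + 1) := by
    have := Real.rpow_le_rpow (by linarith : (0:ℝ) ≤ (n:ℝ) - 2)
      (by linarith : (n:ℝ) - 2 ≤ (n:ℝ)) (by positivity : (0:ℝ) ≤ q + 1)
    exact div_nonneg (by linarith) (by positivity)
  have h2q : ((2:ℝ)) ^ (1 + 1/q) = 2 * 2 ^ (1/q) := by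
    rw [Real.rpow_add two_pos, Real.rpow_one]
  have hsplit : (((n : ℝ) ^ (q + 1) - ((n : ℝ) - 2) ^ (q + 1)) / (2 * (q + 1))) ^ (1/q)
      = (((n : ℝ) ^ (q + 1) - ((n : ℝ) - 2) ^ (q + 1)) / (q + 1)) ^ (1/q) / 2 ^ (1/q) := by
    have heq : ((n : ℝ) ^ (q + 1) - ((n : ℝ) - 2) ^ (q + 1)) / (2 * (q + 1))
        = (((n : ℝ) ^ (q + 1) - ((n : ℝ) - 2) ^ (q + 1)) / (q + 1)) / 2 := by
      rw [div_div, mul_comm]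
    rw [heq, Real.div_rpow hK (by norm_num)]
  rw [hsplit, h2q]
  have h2q0 : (0:ℝ) < (2:ℝ) ^ (1/q) := Real.rpow_pos_of_pos two_pos _
  field_simp
end

section
/- Let f : [a,b] → ℝ be twice differentiable with f'' integrable and |f''| quasi-convex on [a,b] (case n = 2 of the trapezoid-type result). Then |(f(a)+f(b))/2 - (1/(b-a))∫_a^b f(x) dx| ≤ ((b-a)^2/12)·max{|f''(a)|, |f''(b)|}. -/
open MeasureTheory

theorem stmt_15 (f : ℝ → ℝ) (a b : ℝ) (hab : a < b)
    (hf : ∀ t ∈ Set.Icc a b, HasDerivAt f (deriv f t) t)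
    (hf' : ∀ t ∈ Set.Icc a b, HasDerivAt (deriv f) (deriv (deriv f) t) t)
    (hint : IntervalIntegrable (deriv (deriv f)) volume a b)
    (hq : ∀ u ∈ Set.Icc a b, ∀ v ∈ Set.Icc a b, ∀ α ∈ Set.Icc (0 : ℝ) 1,
      |deriv (deriv f) (α * u + (1 - α) * v)| ≤
        max |deriv (deriv f) u| |deriv (deriv f) v|) :
    |(f a + f b) / 2 - (1 / (b - a)) * ∫ x in a..b, f x| ≤
      ((b - a) ^ 2 / 12) * max |deriv (deriv f) a| |deriv (deriv f) b| := by
  have hab' : a ≤ b := hab.le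
  have huIcc : Set.uIcc a b = Set.Icc a b := Set.uIcc_of_le hab'
  set M := max |deriv (deriv f) a| |deriv (deriv f) b| with hM
  -- continuity of f, f', f''-free facts
  have hcf : ContinuousOn f (Set.Icc a b) := fun t ht =>
    (hf t ht).continuousAt.continuousWithinAt
  have hcf' : ContinuousOn (deriv f) (Set.Icc a b) := fun t ht =>
    (hf' t ht).continuousAt.continuousWithinAt
  have hintf : IntervalIntegrable f volume a b := by
    apply ContinuousOn.intervalIntegrable; rwa [huIcc]
  have hintf' : IntervalIntegrable (deriv f) volume a b := by
    apply ContinuousOn.intervalIntegrable; rwa [huIcc]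
  -- First integration by parts
  have ibp1 : ∫ x in a..b, (x - a) * (b - x) * deriv (deriv f) x =
      ((a - a) * (b - a)) * deriv f a * 0 - ∫ x in a..b, (a + b - 2 * x) * deriv f x := by
    have h := intervalIntegral.integral_mul_deriv_eq_deriv_mul
      (u := fun x => (x - a) * (b - x)) (u' := fun x => a + b - 2 * x)
      (v := deriv f) (v' := deriv (deriv f))
      (fun x hx => by
        have : HasDerivAt (fun x : ℝ => (x - a) * (b - x)) (a + b - 2 * x) x := by
          have h1 : HasDerivAt (fun x : ℝ => x - a) 1 x := (hasDerivAt_id x).sub_const a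
          have h2 : HasDerivAt (fun x : ℝ => b - x) (-1) x := by
            simpa using (hasDerivAt_id x).const_sub b
          have := h1.fun_mul h2
          exact this.congr_deriv (by ring)
        exact this)
      (fun x hx => hf' x (huIcc ▸ hx))
      (by apply ContinuousOn.intervalIntegrable; rw [huIcc]; fun_prop)
      hint
    rw [h]; ring_nf
  -- Second integration by parts
  have ibp2 : ∫ x in a..b, (a + b - 2 * x) * deriv f x =
      (a + b - 2 * b) * f b - (a + b - 2 * a) * f a - ∫ x in a..b, (-2) * f x := by
    exact intervalIntegral.integral_mul_deriv_eq_deriv_mul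
      (u := fun x => a + b - 2 * x) (u' := fun _ => (-2 : ℝ))
      (v := f) (v' := deriv f)
      (fun x hx => by
        have : HasDerivAt (fun x : ℝ => a + b - 2 * x) (-2) x := by
          simpa using ((hasDerivAt_id x).const_mul 2).const_sub (a + b)
        exact this)
      (fun x hx => hf x (huIcc ▸ hx))
      (by apply ContinuousOn.intervalIntegrable; rw [huIcc]; fun_prop)
      hintf'
  have hconst : ∫ x in a..b, (-2 : ℝ) * f x = (-2) * ∫ x in a..b, f x := by
    simp [intervalIntegral.integral_const_mul]
  -- key identity
  have key : ∫ x in a..b, (x - a) * (b - x) * deriv (deriv f) x =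
      (b - a) * (f a + f b) - 2 * ∫ x in a..b, f x := by
    rw [ibp1, ibp2, hconst]; ring
  -- pointwise bound on |f''|
  have hbound : ∀ x ∈ Set.Icc a b, |deriv (deriv f) x| ≤ M := by
    intro x hx
    have hα : (b - x) / (b - a) ∈ Set.Icc (0 : ℝ) 1 := by
      constructor
      · exact div_nonneg (by linarith [hx.2]) (by linarith)
      · rw [div_le_one (by linarith)]; linarith [hx.1]
    have := hq a (Set.left_mem_Icc.2 hab') b (Set.right_mem_Icc.2 hab') _ hα
    have hne : b - a ≠ 0 := by linarith
    have hcanc : (b - x) / (b - a) * (b - a) = b - x := div_mul_cancel₀ _ hne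
    have hx' : (b - x) / (b - a) * a + (1 - (b - x) / (b - a)) * b = x := by
      have : (b - x) / (b - a) * a + (1 - (b - x) / (b - a)) * b =
          b - (b - x) / (b - a) * (b - a) := by ring
      rw [this, hcanc]; ring
    rwa [hx'] at this
  -- integrability of integrand
  have hintg : IntervalIntegrable (fun x => (x - a) * (b - x) * deriv (deriv f) x)
      volume a b := by
    have := IntervalIntegrable.continuousOn_mul (g := fun x => (x - a) * (b - x)) hint
      (by rw [huIcc]; fun_prop)
    simpa [mul_assoc, mul_comm, mul_left_comm] using this
  -- bound the integral
  have hMnn : 0 ≤ M := le_trans (abs_nonneg _) (le_max_left _ _)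
  have hintabs : |∫ x in a..b, (x - a) * (b - x) * deriv (deriv f) x| ≤
      ∫ x in a..b, (x - a) * (b - x) * M := by
    calc |∫ x in a..b, (x - a) * (b - x) * deriv (deriv f) x|
        ≤ ∫ x in a..b, |(x - a) * (b - x) * deriv (deriv f) x| :=
          intervalIntegral.abs_integral_le_integral_abs hab'
      _ ≤ ∫ x in a..b, (x - a) * (b - x) * M := by
          apply intervalIntegral.integral_mono_on hab' hintg.abs
          · apply ContinuousOn.intervalIntegrable; rw [huIcc]; fun_prop
          · intro x hx
            rw [abs_mul, abs_mul]
            have h1 : 0 ≤ x - a := by linarith [hx.1]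
            have h2 : 0 ≤ b - x := by linarith [hx.2]
            rw [abs_of_nonneg h1, abs_of_nonneg h2]
            exact mul_le_mul_of_nonneg_left (hbound x hx) (mul_nonneg h1 h2)
  have hpoly : ∫ x in a..b, (x - a) * (b - x) * M = (b - a) ^ 3 / 6 * M := by
    have : ∀ x : ℝ, (x - a) * (b - x) * M =
        M * (a + b) * x - M * x ^ 2 - M * (a * b) := by intro x; ring
    rw [intervalIntegral.integral_congr (fun x _ => this x)]
    rw [intervalIntegral.integral_sub, intervalIntegral.integral_sub]
    · rw [intervalIntegral.integral_const_mul, intervalIntegral.integral_const_mul,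
        integral_id, intervalIntegral.integral_const]
      rw [integral_pow, smul_eq_mul]; push_cast; ring
    · apply ContinuousOn.intervalIntegrable; fun_prop
    · apply ContinuousOn.intervalIntegrable; fun_prop
    · apply (ContinuousOn.intervalIntegrable (by fun_prop)).sub
        (ContinuousOn.intervalIntegrable (by fun_prop))
    · apply ContinuousOn.intervalIntegrable; fun_prop
  -- conclude
  have hba : (0:ℝ) < b - a := by linarith
  have hrw : (f a + f b) / 2 - (1 / (b - a)) * ∫ x in a..b, f x =
      (1 / (2 * (b - a))) * ∫ x in a..b, (x - a) * (b - x) * deriv (deriv f) x := by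
    rw [key]; field_simp
  rw [hrw, abs_mul]
  have h1 : |1 / (2 * (b - a))| = 1 / (2 * (b - a)) := abs_of_pos (by positivity)
  rw [h1]
  calc 1 / (2 * (b - a)) * |∫ x in a..b, (x - a) * (b - x) * deriv (deriv f) x|
      ≤ 1 / (2 * (b - a)) * ((b - a) ^ 3 / 6 * M) := by
        apply mul_le_mul_of_nonneg_left _ (by positivity)
        rw [← hpoly]; exact hintabs
    _ = ((b - a) ^ 2 / 12) * M := by field_simp; ring
end

section
/- Let f : [a,b] → ℝ be differentiable with f' integrable and |f'|^q quasi-convex on [a,b], where p > 1, 1/p + 1/q = 1 (case n = 1 of Theorem 2.2). Then for all x ∈ [a,b]: |∫_a^b f(t) dt - (x-a)f(a) - (b-x)f(b)| ≤ (b-a)^{1/q}·(((x-a)^{p+1} + (b-x)^{p+1})/(p+1))^{1/p}·(max{|f'(a)|^q, |f'(b)|^q})^{1/q}. -/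
open MeasureTheory

lemma aux_key_s18 {p q C : ℝ} (hpq : Real.HolderConjugate p q) (hC : 0 ≤ C) :
    C ^ 2 / 2 ≤ C ^ (1/q) * (C ^ (p+1) / (p+1)) ^ (1/p) := by
  have hp0 : p ≠ 0 := hpq.pos.ne'
  have hq0 : q ≠ 0 := hpq.symm.pos.ne'
  have hp1 : (0:ℝ) < p + 1 := by linarith [hpq.pos]
  rcases eq_or_lt_of_le hC with rfl | hC
  · rw [Real.zero_rpow (by positivity : (1:ℝ)/q ≠ 0)]
    norm_num
  · have e1 : (C ^ (p+1) / (p+1)) ^ (1/p) = C ^ ((p+1) * (1/p)) / (p+1) ^ (1/p) := by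
      rw [Real.div_rpow (Real.rpow_nonneg hC.le _) hp1.le, ← Real.rpow_mul hC.le]
    have e2 : C ^ (1/q) * C ^ ((p+1) * (1/p)) = C ^ (2:ℝ) := by
      rw [← Real.rpow_add hC]
      congr 1
      have h1 : 1/p + 1/q = 1 := by
        rw [one_div, one_div]; exact hpq.inv_add_inv_eq_one
      have h2 : p * (1/p) = 1 := mul_one_div_cancel hp0
      calc 1/q + (p+1) * (1/p) = (1/p + 1/q) + p * (1/p) := by ring
        _ = 2 := by rw [h1, h2]; norm_num
    have e3 : C ^ (2:ℝ) = C ^ 2 := by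
      rw [← Real.rpow_natCast C 2]; norm_num
    have e4 : (p+1) ^ (1/p) ≤ 2 := by
      have hb : p + 1 ≤ 2 ^ p := by
        have := one_add_mul_self_le_rpow_one_add (by norm_num : (-1:ℝ) ≤ 1) hpq.lt.le
        norm_num at this
        linarith
      calc (p+1) ^ (1/p) ≤ (2 ^ p : ℝ) ^ (1/p) :=
            Real.rpow_le_rpow hp1.le hb (by have := hpq.pos; positivity)
        _ = 2 := by
            rw [← Real.rpow_mul (by norm_num), mul_one_div_cancel hp0, Real.rpow_one]
    rw [e1, ← mul_div_assoc, e2, e3]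
    have hd : (0:ℝ) < (p+1) ^ (1/p) := by positivity
    rw [div_le_div_iff₀ (by norm_num) hd]
    exact mul_le_mul_of_nonneg_left e4 (by positivity)

lemma aux_holder {p q A B : ℝ} (hpq : Real.HolderConjugate p q) (hA : 0 ≤ A) (hB : 0 ≤ B) :
    (A ^ 2 + B ^ 2) / 2 ≤ (A + B) ^ (1/q) * ((A ^ (p+1) + B ^ (p+1)) / (p+1)) ^ (1/p) := by
  have hp0 : p ≠ 0 := hpq.pos.ne'
  have hq0 : q ≠ 0 := hpq.symm.pos.ne'
  have hp1 : (0:ℝ) < p + 1 := by linarith [hpq.pos]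
  set DA : ℝ := A ^ (p+1) / (p+1) with hDA
  set DB : ℝ := B ^ (p+1) / (p+1) with hDB
  have hDA0 : 0 ≤ DA := div_nonneg (Real.rpow_nonneg hA _) hp1.le
  have hDB0 : 0 ≤ DB := div_nonneg (Real.rpow_nonneg hB _) hp1.le
  have key := aux_key_s18 hpq hA
  have key' := aux_key_s18 hpq hB
  -- two-point Hölder
  have H := Real.inner_le_Lp_mul_Lq_of_nonneg (s := (Finset.univ : Finset (Fin 2)))
      (f := ![DA ^ (1/p), DB ^ (1/p)]) (g := ![A ^ (1/q), B ^ (1/q)]) hpq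
      (by intro i _; fin_cases i <;> simp <;> positivity)
      (by intro i _; fin_cases i <;> simp <;> positivity)
  simp only [Fin.sum_univ_two, Matrix.cons_val_zero, Matrix.cons_val_one, Matrix.head_cons] at H
  rw [one_div p, one_div q, Real.rpow_inv_rpow hDA0 hp0, Real.rpow_inv_rpow hDB0 hp0,
    Real.rpow_inv_rpow hA hq0, Real.rpow_inv_rpow hB hq0] at H
  have hsum : DA + DB = (A ^ (p+1) + B ^ (p+1)) / (p+1) := by
    rw [hDA, hDB]; ring
  calc (A ^ 2 + B ^ 2) / 2 = A ^ 2 / 2 + B ^ 2 / 2 := by ring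
    _ ≤ A ^ (1/q) * DA ^ (1/p) + B ^ (1/q) * DB ^ (1/p) := add_le_add key key'
    _ = DA ^ (1/p) * A ^ (1/q) + DB ^ (1/p) * B ^ (1/q) := by ring
    _ ≤ (DA + DB) ^ p⁻¹ * (A + B) ^ q⁻¹ := by
        rw [← one_div, ← one_div] at H ⊢
        exact H
    _ = (A + B) ^ (1/q) * ((A ^ (p+1) + B ^ (p+1)) / (p+1)) ^ (1/p) := by
        rw [hsum, one_div, one_div, mul_comm]

theorem stmt_18 (f : ℝ → ℝ) (a b : ℝ) (hab : a < b)
    (p q : ℝ) (hp : 1 < p) (hpq : 1 / p + 1 / q = 1)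
    (hf : ∀ t ∈ Set.Icc a b, HasDerivAt f (deriv f t) t)
    (hint : IntervalIntegrable (deriv f) volume a b)
    (hq : ∀ u ∈ Set.Icc a b, ∀ v ∈ Set.Icc a b, ∀ α ∈ Set.Icc (0 : ℝ) 1,
      |deriv f (α * u + (1 - α) * v)| ^ q ≤ max (|deriv f u| ^ q) (|deriv f v| ^ q))
    (x : ℝ) (hx : x ∈ Set.Icc a b) :
    |(∫ t in a..b, f t) - (x - a) * f a - (b - x) * f b| ≤
      (b - a) ^ (1 / q) *
        (((x - a) ^ (p + 1) + (b - x) ^ (p + 1)) / (p + 1)) ^ (1 / p) *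
        (max (|deriv f a| ^ q) (|deriv f b| ^ q)) ^ (1 / q) := by
  have hab' : a ≤ b := hab.le
  have hax : a ≤ x := hx.1
  have hxb : x ≤ b := hx.2
  have hpq' : Real.HolderConjugate p q := Real.holderConjugate_iff.mpr ⟨hp, by rw [← one_div, ← one_div]; exact hpq⟩
  have hq0 : (0:ℝ) < q := hpq'.symm.pos
  set M : ℝ := max (|deriv f a| ^ q) (|deriv f b| ^ q) with hM
  have hM0 : 0 ≤ M := le_trans (Real.rpow_nonneg (abs_nonneg _) q) (le_max_left _ _)
  have huIcc : Set.uIcc a b = Set.Icc a b := Set.uIcc_of_le hab'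
  -- pointwise bound on the derivative
  have hptw : ∀ t ∈ Set.Icc a b, |deriv f t| ≤ M ^ (1/q) := by
    intro t ht
    have hba : (0:ℝ) < b - a := by linarith
    have hα : (b - t)/(b - a) ∈ Set.Icc (0:ℝ) 1 := by
      constructor
      · apply div_nonneg <;> linarith [ht.2]
      · rw [div_le_one hba]; linarith [ht.1]
    have h1 := hq a (Set.left_mem_Icc.2 hab') b (Set.right_mem_Icc.2 hab') _ hα
    have harg : (b - t)/(b - a) * a + (1 - (b - t)/(b - a)) * b = t := by
      field_simp
      ring
    rw [harg] at h1
    calc |deriv f t| = (|deriv f t| ^ q) ^ q⁻¹ :=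
          (Real.rpow_rpow_inv (abs_nonneg _) hq0.ne').symm
      _ ≤ M ^ q⁻¹ :=
          Real.rpow_le_rpow (Real.rpow_nonneg (abs_nonneg _) _) h1 (by positivity)
      _ = M ^ (1/q) := by rw [one_div]
  -- integration by parts identity
  have hu : ∀ t ∈ Set.uIcc a b, HasDerivAt (fun s => s - x) 1 t := fun t _ => by
    simpa using (hasDerivAt_id t).sub_const x
  have hv : ∀ t ∈ Set.uIcc a b, HasDerivAt f (deriv f t) t := by rw [huIcc]; exact hf
  have parts := intervalIntegral.integral_mul_deriv_eq_deriv_mul hu hv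
    intervalIntegrable_const hint
  simp only [one_mul] at parts
  have hE : (∫ t in a..b, f t) - (x - a) * f a - (b - x) * f b
      = -(∫ t in a..b, (t - x) * deriv f t) := by
    rw [parts]; ring
  rw [hE, abs_neg]
  -- bound by integral of absolute values
  have habs : |∫ t in a..b, (t - x) * deriv f t| ≤ ∫ t in a..b, |t - x| * |deriv f t| := by
    refine le_trans (intervalIntegral.abs_integral_le_integral_abs hab') (le_of_eq ?_)
    apply intervalIntegral.integral_congr
    intro t _
    exact abs_mul _ _
  have hcontabs : Continuous (fun t : ℝ => |t - x|) :=
    continuous_abs.comp (continuous_id.sub continuous_const)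
  have hint1 : IntervalIntegrable (fun t => |t - x| * |deriv f t|) volume a b :=
    hint.abs.continuousOn_mul hcontabs.continuousOn
  have hint2 : IntervalIntegrable (fun t => |t - x| * M ^ (1/q)) volume a b :=
    (hcontabs.mul continuous_const).intervalIntegrable a b
  have hmono : (∫ t in a..b, |t - x| * |deriv f t|) ≤ ∫ t in a..b, |t - x| * M ^ (1/q) := by
    apply intervalIntegral.integral_mono_on hab' hint1 hint2
    intro t ht
    exact mul_le_mul_of_nonneg_left (hptw t ht) (abs_nonneg _)
  -- compute the integral of |t - x|
  have h1 : (∫ t in a..x, |t - x|) = (x - a) ^ 2 / 2 := by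
    rw [intervalIntegral.integral_congr (g := fun t => x - t) ?_]
    · rw [intervalIntegral.integral_sub intervalIntegrable_const
        (continuous_id'.intervalIntegrable a x), integral_id,
        intervalIntegral.integral_const]
      simp only [smul_eq_mul]
      ring
    · intro t ht
      rw [Set.uIcc_of_le hax] at ht
      show |t - x| = x - t
      rw [abs_of_nonpos (by linarith [ht.1, ht.2]), neg_sub]
  have h2 : (∫ t in x..b, |t - x|) = (b - x) ^ 2 / 2 := by
    rw [intervalIntegral.integral_congr (g := fun t => t - x) ?_]
    · rw [intervalIntegral.integral_sub (continuous_id'.intervalIntegrable x b)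
        intervalIntegrable_const, integral_id, intervalIntegral.integral_const]
      simp only [smul_eq_mul]
      ring
    · intro t ht
      rw [Set.uIcc_of_le hxb] at ht
      show |t - x| = t - x
      rw [abs_of_nonneg (by linarith [ht.1, ht.2])]
  have hJ : (∫ t in a..b, |t - x|) = ((x - a) ^ 2 + (b - x) ^ 2) / 2 := by
    rw [← intervalIntegral.integral_add_adjacent_intervals
      (hcontabs.intervalIntegrable a x) (hcontabs.intervalIntegrable x b), h1, h2]
    ring
  have hsplit : (∫ t in a..b, |t - x| * M ^ (1/q))
      = (((x - a) ^ 2 + (b - x) ^ 2) / 2) * M ^ (1/q) := by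
    rw [intervalIntegral.integral_mul_const, hJ]
  -- scalar Hölder inequality
  have hH : ((x - a) ^ 2 + (b - x) ^ 2) / 2
      ≤ (b - a) ^ (1/q) * (((x - a) ^ (p+1) + (b - x) ^ (p+1)) / (p+1)) ^ (1/p) := by
    have := aux_holder hpq' (by linarith : (0:ℝ) ≤ x - a) (by linarith : (0:ℝ) ≤ b - x)
    have hAB : x - a + (b - x) = b - a := by ring
    rwa [hAB] at this
  calc |∫ t in a..b, (t - x) * deriv f t|
      ≤ ∫ t in a..b, |t - x| * |deriv f t| := habs
    _ ≤ ∫ t in a..b, |t - x| * M ^ (1/q) := hmono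
    _ = (((x - a) ^ 2 + (b - x) ^ 2) / 2) * M ^ (1/q) := hsplit
    _ ≤ ((b - a) ^ (1/q) * (((x - a) ^ (p+1) + (b - x) ^ (p+1)) / (p+1)) ^ (1/p)) * M ^ (1/q) :=
        mul_le_mul_of_nonneg_right hH (Real.rpow_nonneg hM0 _)
    _ = (b - a) ^ (1/q) * (((x - a) ^ (p+1) + (b - x) ^ (p+1)) / (p+1)) ^ (1/p) * M ^ (1/q) := by
        ring
end
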